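/- arXiv:1402.4867 — 6 statements merged into one kernel-verified Lean document; each statement's English description precedes it below -/
import Mathlib

section
/- Let π be a permutation of {1,…,n} and let d : {1,…,n} → ℤ satisfy ∑_{i=1}^n d(i) = 0 and π(i) + d(i) ≡ i (mod n) for every i. Then there exists a finite sequence of cyclically adjacent swaps that sorts π and whose net clockwise displacement vector equals d. -/
/-- Applying the swap `q = (i, j)` to `π`: elements `i` and `j` exchange positions
(element `i` moves clockwise, element `j` moves counterclockwise). -/
def applySwap {n : ℕ} (π : Equiv.Perm (Fin n)) (q : Fin n × Fin n) : Equiv.Perm (Fin n) :=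
  π.trans (Equiv.swap (π q.1) (π q.2))

/-- `q = (i, j)` is a cyclically adjacent swap for `π`: element `j` occupies the
position cyclically following the position of element `i` (positions mod `n`). -/
def IsCycSwap {n : ℕ} [NeZero n] (π : Equiv.Perm (Fin n)) (q : Fin n × Fin n) : Prop :=
  π q.2 = π q.1 + 1

/-- `Q` is a valid sequence of cyclically adjacent swaps for `π`: each swap is a
cyclically adjacent swap for the permutation obtained by performing the previous swaps. -/
def IsSwapSeq {n : ℕ} [NeZero n] : Equiv.Perm (Fin n) → List (Fin n × Fin n) → Prop
  | _, [] => True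
  | π, q :: Q => IsCycSwap π q ∧ IsSwapSeq (applySwap π q) Q

/-- The permutation resulting from applying the swaps of `Q` in order to `π`. -/
def applySwaps {n : ℕ} (π : Equiv.Perm (Fin n)) (Q : List (Fin n × Fin n)) :
    Equiv.Perm (Fin n) :=
  Q.foldl applySwap π

/-- `c(i,j)`: the number of times the swap `(i,j)` occurs in `Q` minus the number of
times the swap `(j,i)` occurs in `Q`. -/
def swapCount {n : ℕ} (Q : List (Fin n × Fin n)) (i j : Fin n) : ℤ :=
  (Q.count (i, j) : ℤ) - (Q.count (j, i) : ℤ)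

/-- `d(i) = ∑_{j ≠ i} c(i,j)`: the net clockwise displacement of element `i`. -/
def netDisp {n : ℕ} (Q : List (Fin n × Fin n)) (i : Fin n) : ℤ :=
  ∑ j ∈ Finset.univ.erase i, swapCount Q i j

open Fin.NatCast Fin.CommRing

section Basics
variable {n : ℕ} [NeZero n]
set_option linter.unusedSectionVars false

@[simp] lemma applySwaps_nil (π : Equiv.Perm (Fin n)) : applySwaps π [] = π := rfl

@[simp] lemma applySwaps_cons (π : Equiv.Perm (Fin n)) (q Q) :
    applySwaps π (q :: Q) = applySwaps (applySwap π q) Q := rfl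

lemma applySwaps_append (π : Equiv.Perm (Fin n)) (Q₁ Q₂) :
    applySwaps π (Q₁ ++ Q₂) = applySwaps (applySwaps π Q₁) Q₂ := by
  simp [applySwaps, List.foldl_append]

lemma isSwapSeq_append {π : Equiv.Perm (Fin n)} {Q₁ Q₂}
    (h1 : IsSwapSeq π Q₁) (h2 : IsSwapSeq (applySwaps π Q₁) Q₂) :
    IsSwapSeq π (Q₁ ++ Q₂) := by
  induction Q₁ generalizing π with
  | nil => simpa using h2
  | cons q Q ih =>
    exact ⟨h1.1, ih h1.2 (by simpa using h2)⟩

@[simp] lemma netDisp_nil (i : Fin n) : netDisp ([] : List (Fin n × Fin n)) i = 0 := by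
  simp [netDisp, swapCount]

lemma netDisp_cons (q : Fin n × Fin n) (Q) (i : Fin n) :
    netDisp (q :: Q) i = netDisp [q] i + netDisp Q i := by
  simp only [netDisp, swapCount, ← Finset.sum_add_distrib]
  refine Finset.sum_congr rfl fun j _ => ?_
  simp [List.count_cons]
  ring

lemma netDisp_append (Q₁ Q₂ : List (Fin n × Fin n)) (i : Fin n) :
    netDisp (Q₁ ++ Q₂) i = netDisp Q₁ i + netDisp Q₂ i := by
  induction Q₁ with
  | nil => simp
  | cons q Q ih => rw [List.cons_append, netDisp_cons, ih, netDisp_cons q Q]; ring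

lemma netDisp_single {a b : Fin n} (hab : a ≠ b) (k : Fin n) :
    netDisp [(a, b)] k = if k = a then 1 else if k = b then -1 else 0 := by
  simp only [netDisp, swapCount, List.count_singleton]
  rcases eq_or_ne k a with rfl | hka
  · rw [if_pos rfl]
    rw [Finset.sum_eq_single b]
    · simp [Prod.ext_iff, hab, hab.symm]
    · intro j hj hjb
      simp [Prod.ext_iff, Ne.symm hjb, Ne.symm (Finset.mem_erase.1 hj).1]
    · intro h
      exact absurd (Finset.mem_erase.2 ⟨hab.symm, Finset.mem_univ b⟩) h
  · rw [if_neg hka]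
    rcases eq_or_ne k b with rfl | hkb
    · rw [if_pos rfl]
      rw [Finset.sum_eq_single a]
      · simp [Prod.ext_iff, hka, hab]
      · intro j hj hja
        simp [Prod.ext_iff, Ne.symm hja, Ne.symm (Finset.mem_erase.1 hj).1]
      · intro h
        exact absurd (Finset.mem_erase.2 ⟨hab, Finset.mem_univ a⟩) h
    · rw [if_neg hkb]
      apply Finset.sum_eq_zero
      intro j hj
      simp [Prod.ext_iff, Ne.symm hka, Ne.symm hkb]

lemma sum_netDisp (Q : List (Fin n × Fin n)) : ∑ k, netDisp Q k = 0 := by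
  induction Q with
  | nil => simp
  | cons q Q ih =>
    have : ∑ k, netDisp (q :: Q) k = (∑ k, netDisp [q] k) + ∑ k, netDisp Q k := by
      rw [← Finset.sum_add_distrib]
      exact Finset.sum_congr rfl fun k _ => netDisp_cons q Q k
    rw [this, ih, add_zero]
    obtain ⟨a, b⟩ := q
    rcases eq_or_ne a b with rfl | hab
    · apply Finset.sum_eq_zero
      intro k _
      simp only [netDisp, swapCount]
      apply Finset.sum_eq_zero
      intro j hj
      have hc : List.count (k, j) [(a, a)] = List.count (j, k) [(a, a)] := by
        simp [List.count_singleton, Prod.ext_iff]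
        by_cases h1 : a = k <;> by_cases h2 : a = j <;> simp [h1, h2]
      rw [hc]; ring
    · have : ∀ k, netDisp [(a, b)] k = if k = a then 1 else if k = b then -1 else 0 :=
        netDisp_single hab
      simp only [this]
      have h2 : ∀ x : Fin n, (if x = a then (1:ℤ) else if x = b then -1 else 0) =
          (if x = a then 1 else 0) + (if x = b then -1 else 0) := by
        intro x
        split_ifs with h1 h2 <;> simp_all
      simp only [h2]
      rw [Finset.sum_add_distrib, Finset.sum_ite_eq' Finset.univ a,
        Finset.sum_ite_eq' Finset.univ b]
      simp
section FinHelp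
variable {n : ℕ} [NeZero n]
set_option linter.unusedSectionVars false

lemma fin_one_val (h2 : 2 ≤ n) : (1 : Fin n).val = 1 := by
  rw [Fin.val_one']; exact Nat.mod_eq_of_lt (by omega)

lemma fin_sub_val_of_le {a b : Fin n} (h : b.val ≤ a.val) : (a - b).val = a.val - b.val := by
  rw [Fin.sub_def]
  have hb : b.val ≤ n := le_of_lt b.isLt
  have ha : a.val < n := a.isLt
  show (n - b.val + a.val) % n = a.val - b.val
  have e : n - b.val + a.val = (a.val - b.val) + n := by omega
  rw [e, Nat.add_mod_right]
  exact Nat.mod_eq_of_lt (by omega)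

lemma fin_ne_zero_iff {c : Fin n} : c ≠ 0 ↔ c.val ≠ 0 := by
  constructor
  · intro h h0; exact h (Fin.ext (by simpa using h0))
  · intro h h0; exact h (by simp [h0])

lemma fin_sub_one_val (h2 : 2 ≤ n) {c : Fin n} (hc : c ≠ 0) : (c - 1).val = c.val - 1 := by
  have := fin_ne_zero_iff.1 hc
  rw [fin_sub_val_of_le (by rw [fin_one_val h2]; omega), fin_one_val h2]

lemma fin_neg_one_val (h2 : 2 ≤ n) : ((-1 : Fin n)).val = n - 1 := by
  have : (-1 : Fin n) = 0 - 1 := by ring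
  rw [this, Fin.sub_def, fin_one_val h2]
  simp only [Fin.val_zero, add_zero]
  exact Nat.mod_eq_of_lt (by omega)

lemma fin_eq_one_of_val (h2 : 2 ≤ n) {c : Fin n} (h : c.val = 1) : c = 1 :=
  Fin.ext (by rw [h, fin_one_val h2])

lemma fin_add_nat_val {p : Fin n} {m : ℕ} (h : p.val + m < n) : (p + (m : Fin n)).val = p.val + m := by
  rw [Fin.add_def]
  show (p.val + ((m : Fin n)).val) % n = p.val + m
  rw [Fin.val_natCast, Nat.mod_eq_of_lt (show m < n by omega)]
  exact Nat.mod_eq_of_lt h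

lemma fin_val_add_modEq (x y : Fin n) :
    (((x + y).val : ℤ)) ≡ (x.val : ℤ) + y.val [ZMOD (n : ℤ)] := by
  rw [Fin.add_def]
  show ((((x.val + y.val) % n : ℕ) : ℤ)) ≡ _ [ZMOD _]
  rw [Int.ModEq]
  push_cast
  rw [Int.emod_emod_of_dvd _ dvd_rfl]
end FinHelp

section Steps
variable {n : ℕ} [NeZero n]
set_option linter.unusedSectionVars false

def cwSteps : ℕ → Equiv.Perm (Fin n) → Fin n → List (Fin n × Fin n)
  | 0, _, _ => []
  | m+1, π, i => (i, π.symm (π i + 1)) :: cwSteps m (applySwap π (i, π.symm (π i + 1))) i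

lemma cwSteps_isSwapSeq : ∀ (m : ℕ) (π : Equiv.Perm (Fin n)) (i : Fin n),
    IsSwapSeq π (cwSteps m π i)
  | 0, _, _ => trivial
  | m+1, π, i => ⟨by simp [IsCycSwap], cwSteps_isSwapSeq m _ i⟩

lemma fin_one_ne_zero (h2 : 2 ≤ n) : (1 : Fin n) ≠ 0 := by
  rw [fin_ne_zero_iff, fin_one_val h2]; omega

lemma cw_step_i (π : Equiv.Perm (Fin n)) (i : Fin n) :
    (applySwap π (i, π.symm (π i + 1))) i = π i + 1 := by
  simp [applySwap, Equiv.swap_apply_left]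

lemma cw_step_b (π : Equiv.Perm (Fin n)) (i : Fin n) :
    (applySwap π (i, π.symm (π i + 1))) (π.symm (π i + 1)) = π i := by
  simp [applySwap, Equiv.swap_apply_right]

lemma cw_step_other (h2 : 2 ≤ n) (π : Equiv.Perm (Fin n)) (i x : Fin n)
    (hx : x ≠ i) (hxb : x ≠ π.symm (π i + 1)) :
    (applySwap π (i, π.symm (π i + 1))) x = π x := by
  simp only [applySwap, Equiv.trans_apply, Equiv.apply_symm_apply]
  apply Equiv.swap_apply_of_ne_of_ne
  · exact fun h => hx (π.injective h)
  · intro h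
    exact hxb (by rw [← h]; simp)

lemma cw_b_ne_i (h2 : 2 ≤ n) (π : Equiv.Perm (Fin n)) (i : Fin n) :
    π.symm (π i + 1) ≠ i := by
  intro h
  apply fin_one_ne_zero h2
  have : π i + 1 = π i := by rw [← Equiv.apply_symm_apply π (π i + 1), h]
  linear_combination this

lemma cwSteps_apply (h2 : 2 ≤ n) : ∀ (m : ℕ) (π : Equiv.Perm (Fin n)) (i x : Fin n),
    m ≤ n - 1 →
    applySwaps π (cwSteps m π i) x =
      if (π x - π i).val = 0 then π i + (m : Fin n)
      else if (π x - π i).val ≤ m then π x - 1 else π x := by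
  intro m
  induction m with
  | zero =>
    intro π i x _
    rcases eq_or_ne ((π x - π i).val) 0 with h | h
    · have hxi : π x = π i := sub_eq_zero.1 (Fin.ext (by simpa using h))
      simp [cwSteps, hxi, h]
    · simp only [cwSteps, applySwaps_nil, if_neg h]
      rw [if_neg (by omega)]
  | succ m ih =>
    intro π i x hm
    set b := π.symm (π i + 1) with hb
    have hbv : π b = π i + 1 := by simp [hb]
    set π' := applySwap π (i, b) with hπ'
    have hLHS : applySwaps π (cwSteps (m+1) π i) x = applySwaps π' (cwSteps m π' i) x := rfl
    have hπ'i : π' i = π i + 1 := cw_step_i π i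
    rw [hLHS, ih π' i x (by omega)]
    by_cases hxi : x = i
    · rw [hxi]
      simp only [sub_self, Fin.val_zero, if_pos rfl]
      rw [hπ'i]
      push_cast
      ring
    by_cases hxb : x = b
    · have hπ'b : π' x = π i := by rw [hxb]; exact cw_step_b π i
      have ht' : (π' x - π' i).val = n - 1 := by
        rw [hπ'b, hπ'i]
        have e : π i - (π i + 1) = -1 := by ring
        rw [e, fin_neg_one_val h2]
      have h1 : (π x - π i).val = 1 := by
        rw [hxb, hbv]
        have e : π i + 1 - π i = 1 := by ring
        rw [e, fin_one_val h2]
      rw [ht', h1]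
      rw [if_neg (by omega), if_neg (by omega), if_neg (by omega), if_pos (by omega)]
      rw [hπ'b, hxb, hbv]
      ring
    · have hπ'x : π' x = π x := cw_step_other h2 π i x hxi hxb
      have htne0 : (π x - π i).val ≠ 0 := by
        intro h
        exact hxi (π.injective (sub_eq_zero.1 (Fin.ext (by simpa using h))))
      have htne1 : (π x - π i).val ≠ 1 := by
        intro h
        apply hxb
        have e : π x - π i = 1 := fin_eq_one_of_val h2 h
        have hx : π x = π i + 1 := by linear_combination e
        rw [hb, ← hx]; simp
      have ht' : (π' x - π' i).val = (π x - π i).val - 1 := by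
        rw [hπ'x, hπ'i]
        have e : π x - (π i + 1) = (π x - π i) - 1 := by ring
        rw [e]
        exact fin_sub_one_val h2 (fin_ne_zero_iff.2 htne0)
      rw [ht', hπ'x]
      rw [if_neg (by omega), if_neg htne0]
      rcases le_or_gt ((π x - π i).val) (m+1) with hle | hlt
      · rw [if_pos (by omega), if_pos (by omega)]
      · rw [if_neg (by omega), if_neg (by omega)]

lemma cwSteps_netDisp (h2 : 2 ≤ n) : ∀ (m : ℕ) (π : Equiv.Perm (Fin n)) (i k : Fin n),
    m ≤ n - 1 →
    netDisp (cwSteps m π i) k =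
      if (π k - π i).val = 0 then (m : ℤ)
      else if (π k - π i).val ≤ m then -1 else 0 := by
  intro m
  induction m with
  | zero =>
    intro π i k _
    rcases eq_or_ne ((π k - π i).val) 0 with h | h
    · simp [cwSteps, h]
    · simp only [cwSteps, netDisp_nil, if_neg h]
      rw [if_neg (by omega)]
  | succ m ih =>
    intro π i k hm
    set b := π.symm (π i + 1) with hb
    have hbv : π b = π i + 1 := by simp [hb]
    set π' := applySwap π (i, b) with hπ'
    have hπ'i : π' i = π i + 1 := cw_step_i π i
    have hbi : b ≠ i := cw_b_ne_i h2 π i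
    have hcons : netDisp (cwSteps (m+1) π i) k
        = netDisp [(i, b)] k + netDisp (cwSteps m π' i) k := netDisp_cons _ _ _
    rw [hcons, netDisp_single (Ne.symm hbi) k, ih π' i k (by omega)]
    by_cases hki : k = i
    · rw [hki]
      simp only [sub_self, Fin.val_zero, if_pos rfl]
      push_cast
      ring
    by_cases hkb : k = b
    · have hπ'b : π' k = π i := by rw [hkb]; exact cw_step_b π i
      have ht' : (π' k - π' i).val = n - 1 := by
        rw [hπ'b, hπ'i]
        have e : π i - (π i + 1) = -1 := by ring
        rw [e, fin_neg_one_val h2]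
      have h1 : (π k - π i).val = 1 := by
        rw [hkb, hbv]
        have e : π i + 1 - π i = 1 := by ring
        rw [e, fin_one_val h2]
      rw [ht', h1, if_neg hki, if_pos hkb]
      rw [if_neg (by omega), if_neg (by omega), if_neg (by omega), if_pos (by omega)]
      ring
    · have hπ'x : π' k = π k := cw_step_other h2 π i k hki hkb
      have htne0 : (π k - π i).val ≠ 0 := by
        intro h
        exact hki (π.injective (sub_eq_zero.1 (Fin.ext (by simpa using h))))
      have htne1 : (π k - π i).val ≠ 1 := by
        intro h
        apply hkb
        have e : π k - π i = 1 := fin_eq_one_of_val h2 h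
        have hx : π k = π i + 1 := by linear_combination e
        rw [hb, ← hx]; simp
      have ht' : (π' k - π' i).val = (π k - π i).val - 1 := by
        rw [hπ'x, hπ'i]
        have e : π k - (π i + 1) = (π k - π i) - 1 := by ring
        rw [e]
        exact fin_sub_one_val h2 (fin_ne_zero_iff.2 htne0)
      rw [ht', if_neg hki, if_neg hkb, if_neg (by omega), if_neg htne0]
      rcases le_or_gt ((π k - π i).val) (m+1) with hle | hlt
      · rw [if_pos (by omega), if_pos (by omega)]; ring
      · rw [if_neg (by omega), if_neg (by omega)]; ring
end Steps

section CCW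
variable {n : ℕ} [NeZero n]
set_option linter.unusedSectionVars false
set_option linter.unusedVariables false

def ccwSteps : ℕ → Equiv.Perm (Fin n) → Fin n → List (Fin n × Fin n)
  | 0, _, _ => []
  | m+1, π, j => (π.symm (π j - 1), j) :: ccwSteps m (applySwap π (π.symm (π j - 1), j)) j

lemma ccwSteps_isSwapSeq : ∀ (m : ℕ) (π : Equiv.Perm (Fin n)) (j : Fin n),
    IsSwapSeq π (ccwSteps m π j)
  | 0, _, _ => trivial
  | m+1, π, j => ⟨by simp [IsCycSwap], ccwSteps_isSwapSeq m _ j⟩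

lemma ccw_step_j (π : Equiv.Perm (Fin n)) (j : Fin n) :
    (applySwap π (π.symm (π j - 1), j)) j = π j - 1 := by
  simp [applySwap, Equiv.swap_apply_right]

lemma ccw_step_a (π : Equiv.Perm (Fin n)) (j : Fin n) :
    (applySwap π (π.symm (π j - 1), j)) (π.symm (π j - 1)) = π j := by
  simp [applySwap, Equiv.swap_apply_left]

lemma ccw_step_other (h2 : 2 ≤ n) (π : Equiv.Perm (Fin n)) (j x : Fin n)
    (hx : x ≠ j) (hxa : x ≠ π.symm (π j - 1)) :
    (applySwap π (π.symm (π j - 1), j)) x = π x := by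
  simp only [applySwap, Equiv.trans_apply, Equiv.apply_symm_apply]
  apply Equiv.swap_apply_of_ne_of_ne
  · intro h
    exact hxa (by rw [← h]; simp)
  · exact fun h => hx (π.injective h)

lemma ccw_a_ne_j (h2 : 2 ≤ n) (π : Equiv.Perm (Fin n)) (j : Fin n) :
    π.symm (π j - 1) ≠ j := by
  intro h
  apply fin_one_ne_zero h2
  have : π j - 1 = π j := by rw [← Equiv.apply_symm_apply π (π j - 1), h]
  linear_combination -this

lemma ccwSteps_apply (h2 : 2 ≤ n) : ∀ (m : ℕ) (π : Equiv.Perm (Fin n)) (j x : Fin n),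
    m ≤ n - 1 →
    applySwaps π (ccwSteps m π j) x =
      if (π j - π x).val = 0 then π j - (m : Fin n)
      else if (π j - π x).val ≤ m then π x + 1 else π x := by
  intro m
  induction m with
  | zero =>
    intro π j x _
    rcases eq_or_ne ((π j - π x).val) 0 with h | h
    · have hxj : π j = π x := sub_eq_zero.1 (Fin.ext (by simpa using h))
      simp [ccwSteps, hxj, h]
    · simp only [ccwSteps, applySwaps_nil, if_neg h]
      rw [if_neg (by omega)]
  | succ m ih =>
    intro π j x hm
    set a := π.symm (π j - 1) with ha
    have hav : π a = π j - 1 := by simp [ha]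
    set π' := applySwap π (a, j) with hπ'
    have hLHS : applySwaps π (ccwSteps (m+1) π j) x = applySwaps π' (ccwSteps m π' j) x := rfl
    have hπ'j : π' j = π j - 1 := ccw_step_j π j
    rw [hLHS, ih π' j x (by omega)]
    by_cases hxj : x = j
    · rw [hxj]
      simp only [sub_self, Fin.val_zero, if_pos rfl]
      rw [hπ'j]
      push_cast
      ring
    by_cases hxa : x = a
    · have hπ'a : π' x = π j := by rw [hxa]; exact ccw_step_a π j
      have ht' : (π' j - π' x).val = n - 1 := by
        rw [hπ'a, hπ'j]
        have e : π j - 1 - π j = -1 := by ring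
        rw [e, fin_neg_one_val h2]
      have h1 : (π j - π x).val = 1 := by
        rw [hxa, hav]
        have e : π j - (π j - 1) = 1 := by ring
        rw [e, fin_one_val h2]
      rw [ht', h1]
      rw [if_neg (by omega), if_neg (by omega), if_neg (by omega), if_pos (by omega)]
      rw [hπ'a, hxa, hav]
      ring
    · have hπ'x : π' x = π x := ccw_step_other h2 π j x hxj hxa
      have htne0 : (π j - π x).val ≠ 0 := by
        intro h
        exact hxj (π.injective (sub_eq_zero.1 (Fin.ext (by simpa using h))).symm)
      have htne1 : (π j - π x).val ≠ 1 := by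
        intro h
        apply hxa
        have e : π j - π x = 1 := fin_eq_one_of_val h2 h
        have hx : π x = π j - 1 := by linear_combination -e
        rw [ha, ← hx]; simp
      have ht' : (π' j - π' x).val = (π j - π x).val - 1 := by
        rw [hπ'x, hπ'j]
        have e : π j - 1 - π x = (π j - π x) - 1 := by ring
        rw [e]
        exact fin_sub_one_val h2 (fin_ne_zero_iff.2 htne0)
      rw [ht', hπ'x]
      rw [if_neg (by omega), if_neg htne0]
      rcases le_or_gt ((π j - π x).val) (m+1) with hle | hlt
      · rw [if_pos (by omega), if_pos (by omega)]
      · rw [if_neg (by omega), if_neg (by omega)]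

lemma ccwSteps_netDisp (h2 : 2 ≤ n) : ∀ (m : ℕ) (π : Equiv.Perm (Fin n)) (j k : Fin n),
    m ≤ n - 1 →
    netDisp (ccwSteps m π j) k =
      if (π j - π k).val = 0 then -(m : ℤ)
      else if (π j - π k).val ≤ m then 1 else 0 := by
  intro m
  induction m with
  | zero =>
    intro π j k _
    rcases eq_or_ne ((π j - π k).val) 0 with h | h
    · simp [ccwSteps, h]
    · simp only [ccwSteps, netDisp_nil, if_neg h]
      rw [if_neg (by omega)]
  | succ m ih =>
    intro π j k hm
    set a := π.symm (π j - 1) with ha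
    have hav : π a = π j - 1 := by simp [ha]
    set π' := applySwap π (a, j) with hπ'
    have hπ'j : π' j = π j - 1 := ccw_step_j π j
    have haj : a ≠ j := ccw_a_ne_j h2 π j
    have hcons : netDisp (ccwSteps (m+1) π j) k
        = netDisp [(a, j)] k + netDisp (ccwSteps m π' j) k := netDisp_cons _ _ _
    rw [hcons, netDisp_single haj k, ih π' j k (by omega)]
    by_cases hkj : k = j
    · rw [hkj]
      simp only [sub_self, Fin.val_zero, if_pos rfl]
      simp only [if_true]
      rw [if_neg (Ne.symm haj)]
      push_cast
      ring
    by_cases hka : k = a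
    · have hπ'a : π' k = π j := by rw [hka]; exact ccw_step_a π j
      have ht' : (π' j - π' k).val = n - 1 := by
        rw [hπ'a, hπ'j]
        have e : π j - 1 - π j = -1 := by ring
        rw [e, fin_neg_one_val h2]
      have h1 : (π j - π k).val = 1 := by
        rw [hka, hav]
        have e : π j - (π j - 1) = 1 := by ring
        rw [e, fin_one_val h2]
      rw [ht', h1, if_pos hka]
      rw [if_neg (by omega), if_neg (by omega), if_neg (by omega), if_pos (by omega)]
      ring
    · have hπ'x : π' k = π k := ccw_step_other h2 π j k hkj hka
      have htne0 : (π j - π k).val ≠ 0 := by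
        intro h
        exact hkj (π.injective (sub_eq_zero.1 (Fin.ext (by simpa using h))).symm)
      have htne1 : (π j - π k).val ≠ 1 := by
        intro h
        apply hka
        have e : π j - π k = 1 := fin_eq_one_of_val h2 h
        have hx : π k = π j - 1 := by linear_combination -e
        rw [ha, ← hx]; simp
      have ht' : (π' j - π' k).val = (π j - π k).val - 1 := by
        rw [hπ'x, hπ'j]
        have e : π j - 1 - π k = (π j - π k) - 1 := by ring
        rw [e]
        exact fin_sub_one_val h2 (fin_ne_zero_iff.2 htne0)
      rw [ht', if_neg hka, if_neg hkj, if_neg (by omega), if_neg htne0]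
      rcases le_or_gt ((π j - π k).val) (m+1) with hle | hlt
      · rw [if_pos (by omega), if_pos (by omega)]; ring
      · rw [if_neg (by omega), if_neg (by omega)]; ring
end CCW

section Gadget
variable {n : ℕ} [NeZero n]
set_option linter.unusedSectionVars false

lemma fin_sub_val_eq_zero_iff (π : Equiv.Perm (Fin n)) (k i : Fin n) :
    (π k - π i).val = 0 ↔ k = i := by
  constructor
  · intro h
    exact π.injective (sub_eq_zero.1 (Fin.ext (by simpa using h)))
  · intro h; rw [h]; simp

lemma fin_natCast_pred (h2 : 2 ≤ n) : (((n - 1 : ℕ) : Fin n)) = -1 := by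
  have hn : ((n : ℕ) : Fin n) = 0 := by simp
  rw [Nat.cast_sub (by omega), Nat.cast_one, hn]
  ring

lemma gadget (h2 : 2 ≤ n) (π : Equiv.Perm (Fin n)) (i j : Fin n) (hij : i ≠ j) :
    ∃ Q : List (Fin n × Fin n), IsSwapSeq π Q ∧ applySwaps π Q = π ∧
      ∀ k, netDisp Q k = if k = i then (n : ℤ) else if k = j then -(n : ℤ) else 0 := by
  set Q₁ := cwSteps (n-1) π i with hQ₁
  set π' := applySwaps π Q₁ with hπ'd
  have hπ' : ∀ x, π' x = π x - 1 := by
    intro x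
    rw [hπ'd, hQ₁, cwSteps_apply h2 (n-1) π i x le_rfl]
    rcases eq_or_ne ((π x - π i).val) 0 with h | h
    · rw [if_pos h, fin_natCast_pred h2]
      have : π x = π i := sub_eq_zero.1 (Fin.ext (by simpa using h))
      rw [this]; ring
    · rw [if_neg h, if_pos (by have := (π x - π i).isLt; omega)]
  set Q₂ := ccwSteps (n-1) π' j with hQ₂
  have ht₂ : ∀ x, (π' j - π' x).val = (π j - π x).val := by
    intro x
    rw [hπ' j, hπ' x]
    have e : π j - 1 - (π x - 1) = π j - π x := by ring
    rw [e]
  refine ⟨Q₁ ++ Q₂, ?_, ?_, ?_⟩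
  · exact isSwapSeq_append (cwSteps_isSwapSeq _ _ _) (by rw [hQ₂]; exact ccwSteps_isSwapSeq _ _ _)
  · rw [applySwaps_append, ← hπ'd, hQ₂]
    ext x
    rw [ccwSteps_apply h2 (n-1) π' j x le_rfl]
    rcases eq_or_ne ((π' j - π' x).val) 0 with h | h
    · rw [if_pos h, fin_natCast_pred h2, hπ' j]
      have : π' j = π' x := sub_eq_zero.1 (Fin.ext (by simpa using h))
      have hx : π j = π x := by
        have h1 := hπ' j; have h2' := hπ' x
        rw [h1, h2'] at this
        linear_combination this
      rw [hx]; ring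
    · rw [if_neg h, if_pos (by have := (π' j - π' x).isLt; omega), hπ' x]
      ring
  · intro k
    rw [netDisp_append, hQ₁, hQ₂, cwSteps_netDisp h2 (n-1) π i k le_rfl,
      ccwSteps_netDisp h2 (n-1) π' j k le_rfl]
    have hc1 : ((π k - π i).val = 0) ↔ k = i := fin_sub_val_eq_zero_iff π k i
    have hc2 : ((π' j - π' k).val = 0) ↔ k = j := by
      rw [ht₂ k]
      constructor
      · intro h
        exact (π.injective (sub_eq_zero.1 (Fin.ext (by simpa using h)))).symm
      · intro h; rw [h]; simp
    by_cases hki : k = i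
    · rw [if_pos (hc1.2 hki), if_neg (by rw [hc2]; rw [hki]; exact hij), if_pos hki,
        if_pos (by have := (π' j - π' k).isLt; omega)]
      push_cast [Nat.cast_sub (show 1 ≤ n by omega)]
      ring
    · by_cases hkj : k = j
      · rw [if_neg (fun h => hki (hc1.1 h)), if_pos (hc2.2 hkj), if_neg hki, if_pos hkj,
          if_pos (by have := (π k - π i).isLt; omega)]
        push_cast [Nat.cast_sub (show 1 ≤ n by omega)]
        ring
      · rw [if_neg (fun h => hki (hc1.1 h)), if_neg (fun h => hkj (hc2.1 h)),
          if_pos (by have := (π k - π i).isLt; omega),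
          if_pos (by have := (π' j - π' k).isLt; omega), if_neg hki, if_neg hkj]
        ring
end Gadget

section Sorting
variable {n : ℕ} [NeZero n]
set_option linter.unusedSectionVars false

lemma sort_aux (h2 : 2 ≤ n) : ∀ k : ℕ, k ≤ n → ∀ π : Equiv.Perm (Fin n),
    (∀ j : Fin n, k ≤ (j : ℕ) → π j = j) →
    ∃ Q, IsSwapSeq π Q ∧ applySwaps π Q = 1 := by
  intro k
  induction k with
  | zero =>
    intro _ π hπ
    exact ⟨[], trivial, Equiv.ext fun j => by simpa using hπ j (Nat.zero_le _)⟩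
  | succ k ih =>
    intro hk π hπ
    set e : Fin n := ⟨k, by omega⟩ with he
    have hpe : (π e).val ≤ k := by
      by_contra h
      push_neg at h
      have h1 : π (π e) = π e := hπ (π e) (by omega)
      have h2' : π e = e := π.injective h1
      have h3 : (π e).val = k := by rw [h2']
      omega
    set m : ℕ := k - (π e).val with hm
    set Q₁ := cwSteps m π e with hQ₁
    set π' := applySwaps π Q₁ with hπ'd
    have hπ'sorted : ∀ j : Fin n, k ≤ (j : ℕ) → π' j = j := by
      intro j hj
      rcases eq_or_ne j e with hje | hje
      · rw [hje, hπ'd, hQ₁, cwSteps_apply h2 m π e e (by omega), if_pos (by simp)]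
        apply Fin.ext
        rw [fin_add_nat_val (by omega)]
        have he' : (e : Fin n).val = k := rfl
        omega
      · have hjv : k + 1 ≤ (j : ℕ) := by
          rcases Nat.lt_or_ge (j : ℕ) (k+1) with h | h
          · exfalso
            apply hje
            apply Fin.ext
            simp [he]
            omega
          · exact h
        have hπj : π j = j := hπ j (by omega)
        have ht : (π j - π e).val = (j : ℕ) - (π e).val := by
          rw [hπj]
          exact fin_sub_val_of_le (by omega)
        rw [hπ'd, hQ₁, cwSteps_apply h2 m π e j (by omega), ht,
          if_neg (by omega), if_neg (by omega), hπj]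
    obtain ⟨Q₂, hQ₂seq, hQ₂⟩ := ih (by omega) π' hπ'sorted
    refine ⟨Q₁ ++ Q₂, isSwapSeq_append (cwSteps_isSwapSeq m π e) ?_, ?_⟩
    · rw [← hπ'd]; exact hQ₂seq
    · rw [applySwaps_append, ← hπ'd]; exact hQ₂

lemma sort_exists (h2 : 2 ≤ n) (π : Equiv.Perm (Fin n)) :
    ∃ Q, IsSwapSeq π Q ∧ applySwaps π Q = 1 :=
  sort_aux h2 n le_rfl π (fun j hj => absurd j.isLt (by omega))
end Sorting

section Cong
variable {n : ℕ} [NeZero n]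
set_option linter.unusedSectionVars false

lemma applySwaps_modEq (h2 : 2 ≤ n) : ∀ (Q : List (Fin n × Fin n)) (π : Equiv.Perm (Fin n)),
    IsSwapSeq π Q → ∀ i : Fin n,
    (((applySwaps π Q) i : ℕ) : ℤ) ≡ ((π i : ℕ) : ℤ) + netDisp Q i [ZMOD (n : ℤ)] := by
  intro Q
  induction Q with
  | nil => intro π _ i; simp [Int.ModEq.refl]
  | cons q L ih =>
    intro π hseq i
    obtain ⟨hcyc, hrest⟩ := hseq
    obtain ⟨a, b⟩ := q
    have hcyc' : π b = π a + 1 := hcyc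
    have hab : a ≠ b := by
      intro h
      rw [h] at hcyc'
      exact fin_one_ne_zero h2 (by linear_combination -hcyc')
    set π' := applySwap π (a, b) with hπ'
    have key : ((π' i : ℕ) : ℤ) ≡ ((π i : ℕ) : ℤ) + netDisp [(a, b)] i [ZMOD (n : ℤ)] := by
      rw [netDisp_single hab i]
      by_cases hia : i = a
      · have h1 : π' i = π a + 1 := by
          rw [hia, hπ']
          show Equiv.swap (π a) (π b) (π a) = π a + 1
          rw [Equiv.swap_apply_left, hcyc']
        rw [h1, if_pos hia, hia]
        have := fin_val_add_modEq (π a) 1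
        rw [fin_one_val h2] at this
        exact this.trans (by push_cast; exact Int.ModEq.refl _)
      · by_cases hib : i = b
        · have h1 : π' i = π a := by
            rw [hib, hπ']
            show Equiv.swap (π a) (π b) (π b) = π a
            rw [Equiv.swap_apply_right]
          rw [h1, if_neg hia, if_pos hib, hib]
          have h3 := fin_val_add_modEq (π a) 1
          rw [fin_one_val h2, ← hcyc'] at h3
          have := h3.symm.sub_right 1
          simpa [sub_eq_add_neg] using this
        · have h1 : π' i = π i := by
            rw [hπ']
            show Equiv.swap (π a) (π b) (π i) = π i
            apply Equiv.swap_apply_of_ne_of_ne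
            · exact fun h => hia (π.injective h)
            · exact fun h => hib (π.injective h)
          rw [h1, if_neg hia, if_neg hib]
          simp [Int.ModEq.refl]
    have step : applySwaps π ((a, b) :: L) i = applySwaps π' L i := rfl
    rw [step, netDisp_cons]
    calc (((applySwaps π' L) i : ℕ) : ℤ)
        ≡ ((π' i : ℕ) : ℤ) + netDisp L i [ZMOD (n : ℤ)] := ih π' hrest i
      _ ≡ (((π i : ℕ) : ℤ) + netDisp [(a, b)] i) + netDisp L i [ZMOD (n : ℤ)] :=
          key.add_right _
      _ = ((π i : ℕ) : ℤ) + (netDisp [(a, b)] i + netDisp L i) := by ring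
end Cong

section Ident
variable {n : ℕ} [NeZero n]
set_option linter.unusedSectionVars false

lemma ident_aux (h2 : 2 ≤ n) : ∀ N : ℕ, ∀ d : Fin n → ℤ, (∑ i, d i = 0) →
    (∀ i, (n : ℤ) ∣ d i) → (∑ i, |d i|) ≤ 2 * n * N →
    ∃ Q, IsSwapSeq (1 : Equiv.Perm (Fin n)) Q ∧ applySwaps (1 : Equiv.Perm (Fin n)) Q = 1 ∧
      ∀ k, netDisp Q k = d k := by
  intro N
  induction N with
  | zero =>
    intro d hsum hdvd hbd
    have hz : ∀ k, d k = 0 := by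
      intro k
      have h1 : ∀ x ∈ Finset.univ, (0 : ℤ) ≤ |d x| := fun x _ => abs_nonneg _
      have h2' : |d k| ≤ ∑ i, |d i| :=
        Finset.single_le_sum h1 (Finset.mem_univ k)
      simp at hbd
      have := abs_nonneg (d k)
      have : |d k| = 0 := le_antisymm (by omega) (abs_nonneg _)
      exact abs_eq_zero.1 this
    exact ⟨[], trivial, rfl, fun k => by simp [hz k]⟩
  | succ N ih =>
    intro d hsum hdvd hbd
    by_cases hzero : ∀ k, d k = 0
    · exact ⟨[], trivial, rfl, fun k => by simp [hzero k]⟩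
    push_neg at hzero
    obtain ⟨k₀, hk₀⟩ := hzero
    -- find positive entry
    have hpos : ∃ i, 0 < d i := by
      by_contra h
      push_neg at h
      rcases lt_or_gt_of_ne hk₀ with hneg | hposs
      · have : ∑ i, d i < 0 := by
          have hle : ∀ x ∈ Finset.univ, d x ≤ 0 := fun x _ => h x
          have h1 : ∑ i, d i ≤ ∑ i ∈ Finset.univ.erase k₀, d i + d k₀ := by
            rw [Finset.sum_erase_add _ _ (Finset.mem_univ k₀)]
          have h3 : ∑ i ∈ Finset.univ.erase k₀, d i ≤ 0 :=
            Finset.sum_nonpos fun x _ => h x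
          omega
        omega
      · exact absurd (h k₀) (by omega)
    have hneg : ∃ j, d j < 0 := by
      by_contra h
      push_neg at h
      obtain ⟨i, hi⟩ := hpos
      have h1 : ∑ x ∈ Finset.univ.erase i, d x + d i = ∑ x, d x :=
        Finset.sum_erase_add _ _ (Finset.mem_univ i)
      have h3 : (0:ℤ) ≤ ∑ x ∈ Finset.univ.erase i, d x :=
        Finset.sum_nonneg fun x _ => h x
      omega
    obtain ⟨i, hi⟩ := hpos
    obtain ⟨j, hj⟩ := hneg
    have hij : i ≠ j := fun h => by rw [h] at hi; omega
    have hdi : (n : ℤ) ≤ d i := Int.le_of_dvd hi (hdvd i)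
    have hdj : d j ≤ -(n : ℤ) := by
      have h1 : (n : ℤ) ∣ -d j := (hdvd j).neg_right
      have := Int.le_of_dvd (by omega) h1
      omega
    obtain ⟨Qg, hQgseq, hQgapp, hQgdisp⟩ := gadget h2 (1 : Equiv.Perm (Fin n)) i j hij
    set g : Fin n → ℤ := fun k => if k = i then (n : ℤ) else if k = j then -(n : ℤ) else 0 with hg
    set d' : Fin n → ℤ := fun k => d k - g k with hd'
    have hsum' : ∑ k, d' k = 0 := by
      have h1 : ∑ k, d' k = ∑ k, d k - ∑ k, g k := by
        rw [← Finset.sum_sub_distrib]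
      have h2' : ∑ k, g k = ∑ k, netDisp Qg k := by
        exact Finset.sum_congr rfl fun k _ => (hQgdisp k).symm
      rw [h1, h2', sum_netDisp, hsum]
      ring
    have hdvd' : ∀ k, (n : ℤ) ∣ d' k := by
      intro k
      have hgk : (n : ℤ) ∣ g k := by
        rw [hg]
        dsimp only
        split_ifs
        · exact dvd_rfl
        · exact Dvd.dvd.neg_right dvd_rfl
        · exact dvd_zero _
      exact (hdvd k).sub hgk
    have habs : ∀ k, |d' k| = |d k| + (if k = i then -(n:ℤ) else if k = j then -(n:ℤ) else 0) := by
      intro k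
      rw [hd', hg]
      dsimp only
      split_ifs with hki hkj
      · rw [abs_of_nonneg (show (0:ℤ) ≤ d k - (n:ℤ) by rw [hki]; omega),
          abs_of_nonneg (show (0:ℤ) ≤ d k by rw [hki]; omega)]
        ring
      · rw [abs_of_nonpos (show d k - -(n:ℤ) ≤ 0 by rw [hkj]; omega),
          abs_of_nonpos (show d k ≤ 0 by rw [hkj]; omega)]
        ring
      · ring_nf
    have hbd' : ∑ k, |d' k| ≤ 2 * n * N := by
      have h1 : ∑ k, |d' k| = ∑ k, |d k| + ∑ k,
          (if k = i then -(n:ℤ) else if k = j then -(n:ℤ) else 0) := by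
        rw [← Finset.sum_add_distrib]
        exact Finset.sum_congr rfl fun k _ => habs k
      have h2' : ∀ k : Fin n, (if k = i then -(n:ℤ) else if k = j then -(n:ℤ) else 0) =
          (if k = i then -(n:ℤ) else 0) + (if k = j then -(n:ℤ) else 0) := by
        intro k
        split_ifs with ha hb <;> simp_all
      have h3 : ∑ k, (if k = i then -(n:ℤ) else if k = j then -(n:ℤ) else 0) = -(2*n) := by
        simp only [h2']
        rw [Finset.sum_add_distrib, Finset.sum_ite_eq' Finset.univ i,
          Finset.sum_ite_eq' Finset.univ j]
        simp
        ring
      rw [h1, h3]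
      push_cast at hbd ⊢
      linarith
    obtain ⟨Q', hQ'seq, hQ'app, hQ'disp⟩ := ih d' hsum' hdvd' hbd'
    refine ⟨Qg ++ Q', ?_, ?_, ?_⟩
    · exact isSwapSeq_append hQgseq (by rw [hQgapp]; exact hQ'seq)
    · rw [applySwaps_append, hQgapp, hQ'app]
    · intro k
      rw [netDisp_append, hQgdisp k, hQ'disp k, hd', hg]
      dsimp only
      ring
end Ident


/-- Given a displacement vector `d` satisfying the feasibility conditions for `π`,
there is a sequence of cyclically adjacent swaps sorting `π` whose net clockwise
displacement vector equals `d`. -/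
theorem exists_sorting_seq_of_feasible (n : ℕ) [NeZero n] (π : Equiv.Perm (Fin n))
    (d : Fin n → ℤ) (hsum : ∑ i, d i = 0)
    (hcong : ∀ i : Fin n, ((π i : ℕ) : ℤ) + d i ≡ ((i : ℕ) : ℤ) [ZMOD (n : ℤ)]) :
    ∃ Q : List (Fin n × Fin n), IsSwapSeq π Q ∧ applySwaps π Q = 1 ∧
      ∀ i, netDisp Q i = d i := by
  by_cases h2 : 2 ≤ n
  · obtain ⟨Q₀, hQ₀seq, hQ₀app⟩ := sort_exists h2 π
    set d₀ : Fin n → ℤ := fun i => netDisp Q₀ i with hd₀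
    have hcong₀ : ∀ i : Fin n, ((i : ℕ) : ℤ) ≡ ((π i : ℕ) : ℤ) + d₀ i [ZMOD (n : ℤ)] := by
      intro i
      have h := applySwaps_modEq h2 Q₀ π hQ₀seq i
      rw [hQ₀app] at h
      simpa using h
    set e : Fin n → ℤ := fun i => d i - d₀ i with he
    have hdvd : ∀ i, (n : ℤ) ∣ e i := by
      intro i
      have h1 : ((π i : ℕ) : ℤ) + d i ≡ ((π i : ℕ) : ℤ) + d₀ i [ZMOD (n : ℤ)] :=
        (hcong i).trans (hcong₀ i)
      have h2' : d i ≡ d₀ i [ZMOD (n : ℤ)] := h1.add_left_cancel' _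
      have h3 := h2'.symm.dvd
      simpa [he] using h3
    have hsume : ∑ i, e i = 0 := by
      rw [he]
      have : ∑ i, (d i - d₀ i) = ∑ i, d i - ∑ i, d₀ i := Finset.sum_sub_distrib _ _
      rw [this, hsum, hd₀]
      have : ∑ i, netDisp Q₀ i = 0 := sum_netDisp Q₀
      rw [this]
      ring
    set S : ℤ := ∑ i, |e i| with hS
    have hSnn : 0 ≤ S := Finset.sum_nonneg fun i _ => abs_nonneg _
    have hbd : S ≤ 2 * n * (S.toNat : ℕ) := by
      have h1 : ((S.toNat : ℕ) : ℤ) = S := Int.toNat_of_nonneg hSnn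
      rw [h1]
      have h3 : (1 : ℤ) ≤ 2 * n := by push_cast; omega
      calc S = 1 * S := (one_mul S).symm
        _ ≤ 2 * n * S := mul_le_mul_of_nonneg_right h3 hSnn
    obtain ⟨Q₁, hQ₁seq, hQ₁app, hQ₁disp⟩ := ident_aux h2 S.toNat e hsume hdvd hbd
    refine ⟨Q₀ ++ Q₁, isSwapSeq_append hQ₀seq (by rw [hQ₀app]; exact hQ₁seq), ?_, ?_⟩
    · rw [applySwaps_append, hQ₀app, hQ₁app]
    · intro i
      rw [netDisp_append, hQ₁disp i, he, hd₀]
      ring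
  · have hn : n = 1 := by
      have := NeZero.ne n
      omega
    subst hn
    refine ⟨[], trivial, Equiv.ext fun x => Subsingleton.elim _ _, ?_⟩
    intro i
    rw [netDisp_nil]
    have hi : i = 0 := Fin.eq_zero i
    rw [hi]
    simpa using hsum.symm
end Basics
end

section
/- Let π be a permutation of {1,…,n} and let d : {1,…,n} → ℤ satisfy ∑_{i=1}^n d(i) = 0 and π(i) + d(i) ≡ i (mod n) for every i. If d is not identically zero, then there exist elements i, j occupying cyclically adjacent positions (i.e., π(j) ≡ π(i) + 1 (mod n)) with d(i) > d(j). -/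
/-- If a feasible displacement vector `d` is not identically zero, then some pair of
elements in cyclically adjacent positions has `d(i) > d(j)` (with `j` occupying the
position cyclically after `i`). -/
theorem exists_adjacent_descent (n : ℕ) [NeZero n] (π : Equiv.Perm (Fin n))
    (d : Fin n → ℤ) (hsum : ∑ i, d i = 0)
    (hcong : ∀ i : Fin n, ((π i : ℕ) : ℤ) + d i ≡ ((i : ℕ) : ℤ) [ZMOD (n : ℤ)])
    (hd : d ≠ 0) :
    ∃ i j : Fin n, π j = π i + 1 ∧ d j < d i := by
  by_contra hcon
  push_neg at hcon
  set g : Fin n → ℤ := fun p => d (π.symm p) with hg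
  have step : ∀ p : Fin n, g p ≤ g (p + 1) := by
    intro p
    have h := hcon (π.symm p) (π.symm (p + 1)) (by simp)
    simpa [hg] using h
  open Fin.NatCast in
  have mono : ∀ (k : ℕ) (p : Fin n), g p ≤ g (p + (k : Fin n)) := by
    intro k
    induction k with
    | zero => intro p; simp
    | succ k ih =>
      intro p
      calc g p ≤ g (p + (k : Fin n)) := ih p
        _ ≤ g (p + (k : Fin n) + 1) := step _
        _ = g (p + ((k + 1 : ℕ) : Fin n)) := by rw [Nat.cast_succ, add_assoc]
  have gconst : ∀ p q : Fin n, g p = g q := by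
    intro p q
    have h1 : g p ≤ g q := by
      have := mono (q - p).val p
      simpa [Fin.cast_val_eq_self] using this
    have h2 : g q ≤ g p := by
      have := mono (p - q).val q
      simpa [Fin.cast_val_eq_self] using this
    omega
  have dconst : ∀ i : Fin n, d i = g 0 := by
    intro i
    have := gconst (π i) 0
    simpa [hg] using this
  have : ∑ i : Fin n, d i = n * g 0 := by
    simp [dconst, Finset.sum_const, mul_comm]
  rw [hsum] at this
  have hn : (n : ℤ) ≠ 0 := Int.natCast_ne_zero.mpr (NeZero.ne n)
  have hg0 : g 0 = 0 := by
    rcases mul_eq_zero.mp this.symm with h | h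
    · exact absurd h hn
    · exact h
  apply hd
  funext i
  simp [dconst i, hg0]
end

section
/- Let π be a permutation of {1,…,n}, let d : {1,…,n} → ℤ satisfy ∑_{i=1}^n d(i) = 0 and π(i) + d(i) ≡ i (mod n) for every i, and let Q be any finite sequence of cyclically adjacent swaps that sorts π and has net clockwise displacement vector d. Then for all distinct i, j: if π(i) < π(j), c(i,j) = 1 + max{ m ∈ ℤ : π(i) + d(i) > π(j) + d(j) + m·n }, and if π(i) > π(j), c(i,j) = max{ m ∈ ℤ : π(i) + d(i) > π(j) + d(j) + m·n }. -/
lemma window {n k : ℤ} (hn : 0 < n) (h1 : -n < k * n) (h2 : k * n < n) : k = 0 := by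
  rcases lt_trichotomy k 0 with h | h | h
  · nlinarith
  · exact h
  · nlinarith

lemma res_eq {n a b : ℤ} (hn : 0 < n) (ha0 : 0 ≤ a) (han : a < n)
    (hb0 : 0 ≤ b) (hbn : b < n) {k : ℤ} (h : a = b + k * n) : a = b := by
  have hk : k = 0 := window hn (by linarith) (by linarith)
  rw [hk] at h; linarith

lemma exists_k {n a b : ℤ} (h : a - b = -n ∨ a - b = 0 ∨ a - b = n) :
    ∃ k : ℤ, a = b + k * n := by
  rcases h with h | h | h
  exacts [⟨-1, by linarith⟩, ⟨0, by linarith⟩, ⟨1, by linarith⟩]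

lemma swapCount_cons {n : ℕ} (q : Fin n × Fin n) (Q : List (Fin n × Fin n)) (i j : Fin n) :
    swapCount (q :: Q) i j = swapCount Q i j
      + (if q = (i, j) then 1 else 0) - (if q = (j, i) then 1 else 0) := by
  simp only [swapCount, List.count_cons, beq_iff_eq]
  by_cases h1 : (i, j) = q <;> by_cases h2 : (j, i) = q <;>
    simp [h1, h2, eq_comm] <;> push_cast <;> ring

lemma netDisp_cons_s7 {n : ℕ} (q : Fin n × Fin n) (hq : q.1 ≠ q.2)
    (Q : List (Fin n × Fin n)) (k : Fin n) :
    netDisp (q :: Q) k = netDisp Q k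
      + (if q.1 = k then 1 else 0) - (if q.2 = k then 1 else 0) := by
  unfold netDisp
  have h1 : ∑ j ∈ Finset.univ.erase k, swapCount (q :: Q) k j
      = ∑ j ∈ Finset.univ.erase k, (swapCount Q k j
        + (if q = (k, j) then (1:ℤ) else 0) - (if q = (j, k) then (1:ℤ) else 0)) :=
    Finset.sum_congr rfl fun j _ => swapCount_cons q Q k j
  rw [h1, Finset.sum_sub_distrib, Finset.sum_add_distrib]
  have ha : ∑ j ∈ Finset.univ.erase k, (if q = (k, j) then (1:ℤ) else 0)
      = if q.1 = k then 1 else 0 := by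
    have key : ∀ j : Fin n, (if q = (k, j) then (1:ℤ) else 0)
        = if j = q.2 then (if q.1 = k then (1:ℤ) else 0) else 0 := by
      intro j
      by_cases h : q = (k, j)
      · subst h; simp
      · rw [if_neg h]
        by_cases hj : j = q.2
        · rw [if_pos hj, if_neg fun hk => h (Prod.ext_iff.mpr ⟨hk, hj.symm⟩)]
        · rw [if_neg hj]
    rw [Finset.sum_congr rfl fun j _ => key j, Finset.sum_ite_eq']
    by_cases hk : q.1 = k
    · rw [if_pos (Finset.mem_erase.mpr ⟨fun h2 => hq ((hk.trans h2.symm)), Finset.mem_univ _⟩)]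
    · simp [hk]
  have hb : ∑ j ∈ Finset.univ.erase k, (if q = (j, k) then (1:ℤ) else 0)
      = if q.2 = k then 1 else 0 := by
    have key : ∀ j : Fin n, (if q = (j, k) then (1:ℤ) else 0)
        = if j = q.1 then (if q.2 = k then (1:ℤ) else 0) else 0 := by
      intro j
      by_cases h : q = (j, k)
      · subst h; simp
      · rw [if_neg h]
        by_cases hj : j = q.1
        · rw [if_pos hj, if_neg fun hk => h (Prod.ext_iff.mpr ⟨hj.symm, hk⟩)]
        · rw [if_neg hj]
    rw [Finset.sum_congr rfl fun j _ => key j, Finset.sum_ite_eq']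
    by_cases hk : q.2 = k
    · rw [if_pos (Finset.mem_erase.mpr ⟨fun h2 => hq (h2.trans hk.symm), Finset.mem_univ _⟩)]
    · simp [hk]
  rw [ha, hb]

section auxlemmas
variable (n vi vj v1 v2 : ℕ) (r : ℤ)

lemma auxA (hn2 : 2 ≤ n) (hbi : vi < n) (hbj : vj < n) (hb1 : v1 < n) (hb2 : v2 < n)
    (hvij : vi ≠ vj)
    (hv2 : v2 = v1 + 1 ∨ (v1 + 1 = n ∧ v2 = 0))
    (hρ : (vj < vi ∧ r = (vi : ℤ) - (vj : ℤ)) ∨ (vi < vj ∧ r = (vi : ℤ) - (vj : ℤ) + n))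
    (hvi : v1 = vi) (hvj : v2 = vj) (hr0 : 0 < r) (hrn : r < (n : ℤ)) :
    ((1:ℤ) < (n:ℤ)) ∧ (r = (n:ℤ) - 1) ∧
      ((v2:ℤ) - (v1:ℤ) - 1 = -(n:ℤ) ∨ (v2:ℤ) - (v1:ℤ) - 1 = 0 ∨ (v2:ℤ) - (v1:ℤ) - 1 = (n:ℤ)) := by
  omega

lemma auxB (hn2 : 2 ≤ n) (hbi : vi < n) (hbj : vj < n) (hb1 : v1 < n) (hb2 : v2 < n)
    (hvij : vi ≠ vj)
    (hv2 : v2 = v1 + 1 ∨ (v1 + 1 = n ∧ v2 = 0))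
    (hρ : (vj < vi ∧ r = (vi : ℤ) - (vj : ℤ)) ∨ (vi < vj ∧ r = (vi : ℤ) - (vj : ℤ) + n))
    (hvi : v2 = vi) (hvj : v1 = vj) (hr0 : 0 < r) (hrn : r < (n : ℤ)) :
    (0 < (n:ℤ) - 1 ∧ (n:ℤ) - 1 < (n:ℤ)) ∧ (r = 1) ∧
      ((v1:ℤ) - (v2:ℤ) - ((n:ℤ) - 1) = -(n:ℤ) ∨ (v1:ℤ) - (v2:ℤ) - ((n:ℤ) - 1) = 0 ∨
        (v1:ℤ) - (v2:ℤ) - ((n:ℤ) - 1) = (n:ℤ)) := by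
  omega

lemma auxC (hn2 : 2 ≤ n) (hbi : vi < n) (hbj : vj < n) (hb1 : v1 < n) (hb2 : v2 < n)
    (hvij : vi ≠ vj)
    (hv2 : v2 = v1 + 1 ∨ (v1 + 1 = n ∧ v2 = 0))
    (hρ : (vj < vi ∧ r = (vi : ℤ) - (vj : ℤ)) ∨ (vi < vj ∧ r = (vi : ℤ) - (vj : ℤ) + n))
    (hvi : v1 = vi) (hnvj : vj ≠ v2) (hr0 : 0 < r) (hrn : r < (n : ℤ)) :
    (0 < r + 1 ∧ r + 1 < (n:ℤ)) ∧
      ((v2:ℤ) - (vj:ℤ) - (r + 1) = -(n:ℤ) ∨ (v2:ℤ) - (vj:ℤ) - (r + 1) = 0 ∨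
        (v2:ℤ) - (vj:ℤ) - (r + 1) = (n:ℤ)) := by
  omega

lemma auxD (hn2 : 2 ≤ n) (hbi : vi < n) (hbj : vj < n) (hb1 : v1 < n) (hb2 : v2 < n)
    (hvij : vi ≠ vj)
    (hv2 : v2 = v1 + 1 ∨ (v1 + 1 = n ∧ v2 = 0))
    (hρ : (vj < vi ∧ r = (vi : ℤ) - (vj : ℤ)) ∨ (vi < vj ∧ r = (vi : ℤ) - (vj : ℤ) + n))
    (hvj : v1 = vj) (hnvi : vi ≠ v2) (hr0 : 0 < r) (hrn : r < (n : ℤ)) :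
    (0 < r - 1 ∧ r - 1 < (n:ℤ)) ∧
      ((vi:ℤ) - (v2:ℤ) - (r - 1) = -(n:ℤ) ∨ (vi:ℤ) - (v2:ℤ) - (r - 1) = 0 ∨
        (vi:ℤ) - (v2:ℤ) - (r - 1) = (n:ℤ)) := by
  omega

lemma auxE (hn2 : 2 ≤ n) (hbi : vi < n) (hbj : vj < n) (hb1 : v1 < n) (hb2 : v2 < n)
    (hvij : vi ≠ vj)
    (hv2 : v2 = v1 + 1 ∨ (v1 + 1 = n ∧ v2 = 0))
    (hρ : (vj < vi ∧ r = (vi : ℤ) - (vj : ℤ)) ∨ (vi < vj ∧ r = (vi : ℤ) - (vj : ℤ) + n))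
    (hvi : v2 = vi) (hnvj : vj ≠ v1) (hr0 : 0 < r) (hrn : r < (n : ℤ)) :
    (0 < r - 1 ∧ r - 1 < (n:ℤ)) ∧
      ((v1:ℤ) - (vj:ℤ) - (r - 1) = -(n:ℤ) ∨ (v1:ℤ) - (vj:ℤ) - (r - 1) = 0 ∨
        (v1:ℤ) - (vj:ℤ) - (r - 1) = (n:ℤ)) := by
  omega

lemma auxF (hn2 : 2 ≤ n) (hbi : vi < n) (hbj : vj < n) (hb1 : v1 < n) (hb2 : v2 < n)
    (hvij : vi ≠ vj)
    (hv2 : v2 = v1 + 1 ∨ (v1 + 1 = n ∧ v2 = 0))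
    (hρ : (vj < vi ∧ r = (vi : ℤ) - (vj : ℤ)) ∨ (vi < vj ∧ r = (vi : ℤ) - (vj : ℤ) + n))
    (hvj : v2 = vj) (hnvi : vi ≠ v1) (hr0 : 0 < r) (hrn : r < (n : ℤ)) :
    (0 < r + 1 ∧ r + 1 < (n:ℤ)) ∧
      ((vi:ℤ) - (v1:ℤ) - (r + 1) = -(n:ℤ) ∨ (vi:ℤ) - (v1:ℤ) - (r + 1) = 0 ∨
        (vi:ℤ) - (v1:ℤ) - (r + 1) = (n:ℤ)) := by
  omega

end auxlemmas

set_option maxHeartbeats 1000000 in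
lemma core {n : ℕ} [NeZero n] (i j : Fin n) (hij : i ≠ j) :
    ∀ (Q : List (Fin n × Fin n)) (π : Equiv.Perm (Fin n)), IsSwapSeq π Q →
    ∀ r : ℤ, 0 < r → r < (n : ℤ) →
    (∃ k : ℤ, ((π i : ℕ) : ℤ) - ((π j : ℕ) : ℤ) = r + k * n) →
    ∃ r' : ℤ, 0 < r' ∧ r' < (n : ℤ) ∧
      (∃ k' : ℤ, ((applySwaps π Q i : ℕ) : ℤ) - ((applySwaps π Q j : ℕ) : ℤ) = r' + k' * n) ∧
      r' + swapCount Q i j * n = r + (netDisp Q i - netDisp Q j) := by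
  intro Q
  induction Q with
  | nil =>
      intro π _ r hr0 hrn hk
      obtain ⟨k, hk⟩ := hk
      refine ⟨r, hr0, hrn, ⟨k, hk⟩, ?_⟩
      simp [swapCount, netDisp]
  | cons q Q ih =>
      intro π hQ r hr0 hrn hkk
      obtain ⟨k, hk⟩ := hkk
      obtain ⟨hcyc, hQ'⟩ := hQ
      have hn2 : 2 ≤ n := by
        have h1 := i.isLt
        have h2 := j.isLt
        have h3 : (i : ℕ) ≠ (j : ℕ) := fun h => hij (Fin.ext h)
        omega
      have hn0 : (0 : ℤ) < (n : ℤ) := by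
        clear hk; omega
      have hone : ((1 : Fin n) : ℕ) = 1 := by
        rw [Fin.val_one']; exact Nat.mod_eq_of_lt hn2
      have hb1 := (π q.1).isLt
      have hb2 := (π q.2).isLt
      have hbi := (π i).isLt
      have hbj := (π j).isLt
      have hv2 : (π q.2 : ℕ) = (π q.1 : ℕ) + 1 ∨ ((π q.1 : ℕ) + 1 = n ∧ (π q.2 : ℕ) = 0) := by
        have h := congrArg Fin.val hcyc
        rw [Fin.val_add_eq_ite, hone] at h
        clear hk
        by_cases hc : n ≤ (π q.1 : ℕ) + 1
        · right; rw [if_pos hc] at h; omega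
        · left; rw [if_neg hc] at h; omega
      have hq12 : q.1 ≠ q.2 := by
        intro h
        have h2 : (π q.1 : ℕ) = (π q.2 : ℕ) := congrArg Fin.val (congrArg π h)
        clear hk
        omega
      have hπ' : ∀ x, applySwap π q x
          = if x = q.1 then π q.2 else if x = q.2 then π q.1 else π x := by
        intro x
        show Equiv.swap (π q.1) (π q.2) (π x) = _
        by_cases h1 : x = q.1
        · rw [if_pos h1, h1, Equiv.swap_apply_left]
        · rw [if_neg h1]
          by_cases h2 : x = q.2
          · rw [if_pos h2, h2, Equiv.swap_apply_right]
          · rw [if_neg h2]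
            exact Equiv.swap_apply_of_ne_of_ne (fun hh => h1 (π.injective hh))
              (fun hh => h2 (π.injective hh))
      have hvij : (π i : ℕ) ≠ (π j : ℕ) := fun h => hij (π.injective (Fin.ext h))
      have hρ : ((π j : ℕ) < (π i : ℕ) ∧ r = ((π i : ℕ) : ℤ) - ((π j : ℕ) : ℤ))
          ∨ ((π i : ℕ) < (π j : ℕ) ∧ r = ((π i : ℕ) : ℤ) - ((π j : ℕ) : ℤ) + n) := by
        rcases Nat.lt_or_ge (π j : ℕ) (π i : ℕ) with h | h
        · left
          refine ⟨h, ?_⟩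
          have := res_eq hn0 (a := ((π i : ℕ) : ℤ) - ((π j : ℕ) : ℤ)) (b := r)
            (by clear hk; omega) (by clear hk; omega) (by clear hk; omega)
            (by clear hk; omega) hk
          clear hk; omega
        · right
          have h' : (π i : ℕ) < (π j : ℕ) := by clear hk; omega
          refine ⟨h', ?_⟩
          have hk2 : ((π i : ℕ) : ℤ) - ((π j : ℕ) : ℤ) + n = r + (k + 1) * n := by
            linear_combination hk
          have := res_eq hn0 (a := ((π i : ℕ) : ℤ) - ((π j : ℕ) : ℤ) + n) (b := r)
            (by clear hk hk2; omega) (by clear hk hk2; omega) (by clear hk hk2; omega)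
            (by clear hk hk2; omega) hk2
          clear hk hk2; omega
      have hsc := swapCount_cons q Q i j
      have hndi := netDisp_cons_s7 q hq12 Q i
      have hndj := netDisp_cons_s7 q hq12 Q j
      by_cases hA : q = (i, j)
      · -- swap (i, j): upward crossing
        have hq1 : q.1 = i := by rw [hA]
        have hq2 : q.2 = j := by rw [hA]
        have hvi : (π q.1 : ℕ) = (π i : ℕ) := by rw [hq1]
        have hvj : (π q.2 : ℕ) = (π j : ℕ) := by rw [hq2]
        have hv'i : ((applySwap π q) i : ℕ) = (π q.2 : ℕ) := by
          rw [hπ' i, if_pos hq1.symm]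
        have hv'j : ((applySwap π q) j : ℕ) = (π q.1 : ℕ) := by
          rw [hπ' j, if_neg (fun h => hij (h.trans hq1).symm), if_pos hq2.symm]
        obtain ⟨hx1, hr, hx3⟩ := auxA n (π i : ℕ) (π j : ℕ) (π q.1 : ℕ) (π q.2 : ℕ) r
          hn2 hbi hbj hb1 hb2 hvij hv2 hρ hvi hvj hr0 hrn
        obtain ⟨r', p1, p2, pk, heq⟩ := ih (applySwap π q) hQ' 1 (by norm_num) hx1
          (exists_k (by rw [hv'i, hv'j]; exact hx3))
        refine ⟨r', p1, p2, ?_, ?_⟩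
        · simpa only [applySwaps, List.foldl_cons] using pk
        · rw [hsc, hndi, hndj, if_pos hA,
            if_neg (show q ≠ (j, i) from fun h => hij (congrArg Prod.fst (hA.symm.trans h))),
            if_pos hq1, if_neg (show q.2 ≠ i from fun h => hij (hq2.symm.trans h).symm),
            if_neg (show q.1 ≠ j from fun h => hij (hq1.symm.trans h)), if_pos hq2, hr]
          linear_combination heq
      · by_cases hB : q = (j, i)
        · -- swap (j, i): downward crossing
          have hq1 : q.1 = j := by rw [hB]
          have hq2 : q.2 = i := by rw [hB]
          have hvi : (π q.2 : ℕ) = (π i : ℕ) := by rw [hq2]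
          have hvj : (π q.1 : ℕ) = (π j : ℕ) := by rw [hq1]
          have hv'i : ((applySwap π q) i : ℕ) = (π q.1 : ℕ) := by
            rw [hπ' i, if_neg (fun h => hij (h.trans hq1)), if_pos hq2.symm]
          have hv'j : ((applySwap π q) j : ℕ) = (π q.2 : ℕ) := by
            rw [hπ' j, if_pos hq1.symm]
          obtain ⟨⟨hx1, hx2⟩, hr, hx3⟩ := auxB n (π i : ℕ) (π j : ℕ) (π q.1 : ℕ) (π q.2 : ℕ) r
            hn2 hbi hbj hb1 hb2 hvij hv2 hρ hvi hvj hr0 hrn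
          obtain ⟨r', p1, p2, pk, heq⟩ := ih (applySwap π q) hQ' ((n : ℤ) - 1) hx1 hx2
            (exists_k (by rw [hv'i, hv'j]; exact hx3))
          refine ⟨r', p1, p2, ?_, ?_⟩
          · simpa only [applySwaps, List.foldl_cons] using pk
          · rw [hsc, hndi, hndj, if_neg hA, if_pos hB,
              if_neg (show q.1 ≠ i from fun h => hij (hq1.symm.trans h).symm),
              if_pos hq2, if_pos hq1,
              if_neg (show q.2 ≠ j from fun h => hij (hq2.symm.trans h)), hr]
            linear_combination heq
        · by_cases hc1i : q.1 = i
          · -- element i moves clockwise past a stranger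
            have hne2j : q.2 ≠ j := fun h => hA (Prod.ext_iff.mpr ⟨hc1i, h⟩)
            have hne2i : q.2 ≠ i := fun h => hq12 (hc1i.trans h.symm)
            have hvi : (π q.1 : ℕ) = (π i : ℕ) := by rw [hc1i]
            have hnvj : (π j : ℕ) ≠ (π q.2 : ℕ) :=
              fun h => hne2j (π.injective (Fin.ext h)).symm
            have hv'i : ((applySwap π q) i : ℕ) = (π q.2 : ℕ) := by
              rw [hπ' i, if_pos hc1i.symm]
            have hv'j : ((applySwap π q) j : ℕ) = (π j : ℕ) := by
              rw [hπ' j, if_neg (fun h => hij (h.trans hc1i).symm),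
                if_neg (fun h => hne2j h.symm)]
            obtain ⟨⟨hx1, hx2⟩, hx3⟩ := auxC n (π i : ℕ) (π j : ℕ) (π q.1 : ℕ) (π q.2 : ℕ) r
              hn2 hbi hbj hb1 hb2 hvij hv2 hρ hvi hnvj hr0 hrn
            obtain ⟨r', p1, p2, pk, heq⟩ := ih (applySwap π q) hQ' (r + 1) hx1 hx2
              (exists_k (by rw [hv'i, hv'j]; exact hx3))
            refine ⟨r', p1, p2, ?_, ?_⟩
            · simpa only [applySwaps, List.foldl_cons] using pk
            · rw [hsc, hndi, hndj, if_neg hA, if_neg hB, if_pos hc1i,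
                if_neg hne2i, if_neg (show q.1 ≠ j from fun h => hij (hc1i.symm.trans h)),
                if_neg hne2j]
              linear_combination heq
          · by_cases hc1j : q.1 = j
            · -- element j moves clockwise past a stranger
              have hne2i : q.2 ≠ i := fun h => hB (Prod.ext_iff.mpr ⟨hc1j, h⟩)
              have hne2j : q.2 ≠ j := fun h => hq12 (hc1j.trans h.symm)
              have hvj : (π q.1 : ℕ) = (π j : ℕ) := by rw [hc1j]
              have hnvi : (π i : ℕ) ≠ (π q.2 : ℕ) :=
                fun h => hne2i (π.injective (Fin.ext h)).symm
              have hv'j : ((applySwap π q) j : ℕ) = (π q.2 : ℕ) := by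
                rw [hπ' j, if_pos hc1j.symm]
              have hv'i : ((applySwap π q) i : ℕ) = (π i : ℕ) := by
                rw [hπ' i, if_neg (fun h => hij (h.trans hc1j)),
                  if_neg (fun h => hne2i h.symm)]
              obtain ⟨⟨hx1, hx2⟩, hx3⟩ := auxD n (π i : ℕ) (π j : ℕ) (π q.1 : ℕ) (π q.2 : ℕ) r
                hn2 hbi hbj hb1 hb2 hvij hv2 hρ hvj hnvi hr0 hrn
              obtain ⟨r', p1, p2, pk, heq⟩ := ih (applySwap π q) hQ' (r - 1) hx1 hx2
                (exists_k (by rw [hv'i, hv'j]; exact hx3))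
              refine ⟨r', p1, p2, ?_, ?_⟩
              · simpa only [applySwaps, List.foldl_cons] using pk
              · rw [hsc, hndi, hndj, if_neg hA, if_neg hB, if_neg hc1i,
                  if_neg hne2i, if_pos hc1j, if_neg hne2j]
                linear_combination heq
            · by_cases hc2i : q.2 = i
              · -- element i moves counterclockwise past a stranger
                have hvi : (π q.2 : ℕ) = (π i : ℕ) := by rw [hc2i]
                have hnvj : (π j : ℕ) ≠ (π q.1 : ℕ) :=
                  fun h => hc1j (π.injective (Fin.ext h)).symm
                have hv'i : ((applySwap π q) i : ℕ) = (π q.1 : ℕ) := by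
                  rw [hπ' i, if_neg (fun h => hc1i h.symm), if_pos hc2i.symm]
                have hv'j : ((applySwap π q) j : ℕ) = (π j : ℕ) := by
                  rw [hπ' j, if_neg (fun h => hc1j h.symm),
                    if_neg (fun h => hij (h.trans hc2i).symm)]
                obtain ⟨⟨hx1, hx2⟩, hx3⟩ := auxE n (π i : ℕ) (π j : ℕ) (π q.1 : ℕ) (π q.2 : ℕ) r
                  hn2 hbi hbj hb1 hb2 hvij hv2 hρ hvi hnvj hr0 hrn
                obtain ⟨r', p1, p2, pk, heq⟩ := ih (applySwap π q) hQ' (r - 1) hx1 hx2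
                  (exists_k (by rw [hv'i, hv'j]; exact hx3))
                refine ⟨r', p1, p2, ?_, ?_⟩
                · simpa only [applySwaps, List.foldl_cons] using pk
                · rw [hsc, hndi, hndj, if_neg hA, if_neg hB, if_neg hc1i,
                    if_pos hc2i, if_neg hc1j,
                    if_neg (show q.2 ≠ j from fun h => hij (hc2i.symm.trans h))]
                  linear_combination heq
              · by_cases hc2j : q.2 = j
                · -- element j moves counterclockwise past a stranger
                  have hvj : (π q.2 : ℕ) = (π j : ℕ) := by rw [hc2j]
                  have hnvi : (π i : ℕ) ≠ (π q.1 : ℕ) :=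
                    fun h => hc1i (π.injective (Fin.ext h)).symm
                  have hv'j : ((applySwap π q) j : ℕ) = (π q.1 : ℕ) := by
                    rw [hπ' j, if_neg (fun h => hc1j h.symm), if_pos hc2j.symm]
                  have hv'i : ((applySwap π q) i : ℕ) = (π i : ℕ) := by
                    rw [hπ' i, if_neg (fun h => hc1i h.symm),
                      if_neg (fun h => hij (h.trans hc2j))]
                  obtain ⟨⟨hx1, hx2⟩, hx3⟩ := auxF n (π i : ℕ) (π j : ℕ) (π q.1 : ℕ) (π q.2 : ℕ) r
                    hn2 hbi hbj hb1 hb2 hvij hv2 hρ hvj hnvi hr0 hrn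
                  obtain ⟨r', p1, p2, pk, heq⟩ := ih (applySwap π q) hQ' (r + 1) hx1 hx2
                    (exists_k (by rw [hv'i, hv'j]; exact hx3))
                  refine ⟨r', p1, p2, ?_, ?_⟩
                  · simpa only [applySwaps, List.foldl_cons] using pk
                  · rw [hsc, hndi, hndj, if_neg hA, if_neg hB, if_neg hc1i,
                      if_neg hc2i, if_neg hc1j, if_pos hc2j]
                    linear_combination heq
                · -- swap not involving i or j
                  have hv'i : ((applySwap π q) i : ℕ) = (π i : ℕ) := by
                    rw [hπ' i, if_neg (fun h => hc1i h.symm), if_neg (fun h => hc2i h.symm)]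
                  have hv'j : ((applySwap π q) j : ℕ) = (π j : ℕ) := by
                    rw [hπ' j, if_neg (fun h => hc1j h.symm), if_neg (fun h => hc2j h.symm)]
                  obtain ⟨r', p1, p2, pk, heq⟩ := ih (applySwap π q) hQ' r hr0 hrn
                    ⟨k, by rw [hv'i, hv'j]; exact hk⟩
                  refine ⟨r', p1, p2, ?_, ?_⟩
                  · simpa only [applySwaps, List.foldl_cons] using pk
                  · rw [hsc, hndi, hndj, if_neg hA, if_neg hB, if_neg hc1i,
                      if_neg hc2i, if_neg hc1j, if_neg hc2j]
                    linear_combination heq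

/-- Jerrum's formula: for any sequence of cyclically adjacent swaps sorting `π` with
net displacement vector `d`, the net swap count `c(i,j)` equals
`1 + max{m : π(i)+d(i) > π(j)+d(j)+m·n}` if `π(i) < π(j)`, and
`max{m : π(i)+d(i) > π(j)+d(j)+m·n}` if `π(i) > π(j)`. -/
theorem swapCount_formula (n : ℕ) [NeZero n] (π : Equiv.Perm (Fin n))
    (d : Fin n → ℤ) (hsum : ∑ i, d i = 0)
    (hcong : ∀ i : Fin n, ((π i : ℕ) : ℤ) + d i ≡ ((i : ℕ) : ℤ) [ZMOD (n : ℤ)])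
    (Q : List (Fin n × Fin n)) (hQ : IsSwapSeq π Q) (hsort : applySwaps π Q = 1)
    (hd : ∀ i, netDisp Q i = d i) :
    ∀ i j : Fin n, i ≠ j → ∀ M : ℤ,
      IsGreatest {m : ℤ | ((π j : ℕ) : ℤ) + d j + m * n < ((π i : ℕ) : ℤ) + d i} M →
      swapCount Q i j = if π i < π j then 1 + M else M := by
  intro i j hij M hM
  have hn0 : (0 : ℤ) < (n : ℤ) := by
    have := i.isLt; omega
  have hM1 : ((π j : ℕ) : ℤ) + d j + M * n < ((π i : ℕ) : ℤ) + d i := hM.1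
  have hM2 : ((π i : ℕ) : ℤ) + d i ≤ ((π j : ℕ) : ℤ) + d j + (M + 1) * n := by
    by_contra h
    push_neg at h
    have := hM.2 h
    omega
  have hvij : (π i : ℕ) ≠ (π j : ℕ) := fun h => hij (π.injective (Fin.ext h))
  have hbi := (π i).isLt
  have hbj := (π j).isLt
  rcases Nat.lt_or_ge (π j : ℕ) (π i : ℕ) with hlt | hge
  · obtain ⟨r', p1, p2, _, heq⟩ := core i j hij Q π hQ (((π i : ℕ) : ℤ) - ((π j : ℕ) : ℤ))
      (by omega) (by omega) ⟨0, by ring⟩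
    rw [hd i, hd j] at heq
    have hnlt : ¬ (π i < π j) := by
      rw [Fin.lt_def]; omega
    rw [if_neg hnlt]
    have key1 : M * (n : ℤ) < (swapCount Q i j + 1) * (n : ℤ) := by linarith
    have key2 : swapCount Q i j * (n : ℤ) < (M + 1) * (n : ℤ) := by linarith
    have h1 : M < swapCount Q i j + 1 := lt_of_mul_lt_mul_right key1 (le_of_lt hn0)
    have h2 : swapCount Q i j < M + 1 := lt_of_mul_lt_mul_right key2 (le_of_lt hn0)
    omega
  · have hlt' : (π i : ℕ) < (π j : ℕ) := by omega
    obtain ⟨r', p1, p2, _, heq⟩ := core i j hij Q π hQ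
      (((π i : ℕ) : ℤ) - ((π j : ℕ) : ℤ) + n)
      (by omega) (by omega) ⟨-1, by ring⟩
    rw [hd i, hd j] at heq
    have hplt : π i < π j := by
      rw [Fin.lt_def]; omega
    rw [if_pos hplt]
    have key1 : M * (n : ℤ) < swapCount Q i j * (n : ℤ) := by linarith
    have key2 : (swapCount Q i j - 1) * (n : ℤ) < (M + 1) * (n : ℤ) := by linarith
    have h1 : M < swapCount Q i j := lt_of_mul_lt_mul_right key1 (le_of_lt hn0)
    have h2 : swapCount Q i j - 1 < M + 1 := lt_of_mul_lt_mul_right key2 (le_of_lt hn0)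
    omega
end

section
/- For every permutation π of {1,…,n} there exists d : {1,…,n} → ℤ such that ∑_{i=1}^n d(i) = 0, π(i) + d(i) ≡ i (mod n) for every i, and d(i) − d(j) ≤ n for all i, j ∈ {1,…,n}. -/
/-- For every permutation `π` of `{1,…,n}` there is a feasible displacement vector `d`
with `d(i) - d(j) ≤ n` for all `i, j`. -/
theorem exists_feasible_bounded_disp (n : ℕ) (π : Equiv.Perm (Fin n)) :
    ∃ d : Fin n → ℤ, ∑ i, d i = 0 ∧
      (∀ i : Fin n, ((π i : ℕ) : ℤ) + d i ≡ ((i : ℕ) : ℤ) [ZMOD (n : ℤ)]) ∧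
      ∀ i j : Fin n, d i - d j ≤ (n : ℤ) := by
  rcases Nat.eq_zero_or_pos n with hn | hn
  · subst hn
    exact ⟨0, by simp, fun i => i.elim0, fun i => i.elim0⟩
  have hn' : (0:ℤ) < n := by exact_mod_cast hn
  set a : Fin n → ℤ := fun i => ((i:ℕ):ℤ) - ((π i : ℕ):ℤ) with ha
  set e : Fin n → ℤ := fun i => a i % n with he
  have he0 : ∀ i, 0 ≤ e i := fun i => Int.emod_nonneg _ (by omega)
  have helt : ∀ i, e i < n := fun i => Int.emod_lt_of_pos _ hn'
  have hsum0 : ∑ i, a i = 0 := by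
    rw [ha, Finset.sum_sub_distrib, Equiv.sum_comp π (fun i : Fin n => ((i:ℕ):ℤ))]
    ring
  have hdvd : (n:ℤ) ∣ ∑ i, e i := by
    apply Int.dvd_of_emod_eq_zero
    calc (∑ i, e i) % n = (∑ i, a i) % n := (Finset.sum_int_mod Finset.univ (n:ℤ) a).symm
      _ = 0 := by rw [hsum0]; simp
  obtain ⟨k, hk⟩ := hdvd
  have hk0 : 0 ≤ k := by
    have h1 : 0 ≤ ∑ i, e i := Finset.sum_nonneg fun i _ => he0 i
    nlinarith
  have hkn : k ≤ n := by
    have h1 : ∑ i, e i ≤ ∑ _i : Fin n, (n:ℤ) :=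
      Finset.sum_le_sum fun i _ => le_of_lt (helt i)
    have h2 : ∑ _i : Fin n, (n:ℤ) = n * n := by
      simp [Finset.sum_const, Finset.card_univ, mul_comm]
    nlinarith
  set m := k.toNat with hm
  have hmk : (m:ℤ) = k := Int.toNat_of_nonneg hk0
  have hmn : m ≤ n := by omega
  set τ := Tuple.sort e with hτ
  have hmono := Tuple.monotone_sort e
  set d : Fin n → ℤ := fun i => e i - if n - m ≤ ((τ.symm i : Fin n) : ℕ) then (n:ℤ) else 0
    with hd
  have hsum_if :
      ∑ i, (if n - m ≤ ((τ.symm i : Fin n):ℕ) then (n:ℤ) else 0) = n * m := by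
    rw [← Equiv.sum_comp τ
      (fun i => if n - m ≤ ((τ.symm i : Fin n):ℕ) then (n:ℤ) else 0)]
    simp only [Equiv.symm_apply_apply]
    rw [Fin.sum_univ_eq_sum_range (fun j => if n - m ≤ j then (n:ℤ) else 0)]
    rw [← Finset.sum_filter]
    have hfil : (Finset.range n).filter (fun j => n - m ≤ j) = Finset.Ico (n-m) n := by
      ext x
      simp only [Finset.mem_filter, Finset.mem_range, Finset.mem_Ico]
      omega
    rw [hfil, Finset.sum_const, Nat.card_Ico]
    have : n - (n - m) = m := by omega
    rw [this]
    simp [mul_comm]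
  refine ⟨d, ?_, ?_, ?_⟩
  · rw [hd]
    rw [Finset.sum_sub_distrib, hsum_if, hk, hmk]
    ring
  · intro i
    have h1 : d i % (n:ℤ) = a i % n := by
      rw [hd]
      simp only
      split_ifs with h
      · rw [Int.sub_emod, Int.emod_self, sub_zero, Int.emod_emod_of_dvd _ dvd_rfl, he]
        exact Int.emod_emod_of_dvd _ dvd_rfl
      · rw [sub_zero, he]
        exact Int.emod_emod_of_dvd _ dvd_rfl
    have h2 : d i ≡ a i [ZMOD (n:ℤ)] := h1
    have h3 := Int.ModEq.add_left (((π i : ℕ):ℤ)) h2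
    rw [ha] at h3
    simpa using h3
  · intro i j
    rw [hd]
    simp only
    have hi := he0 i
    have hj := he0 j
    have hi' := helt i
    have hj' := helt j
    split_ifs with h1 h2 h2
    · linarith
    · linarith
    · -- i not shifted, j shifted : need e i ≤ e j
      have hij : e i ≤ e j := by
        have hle : τ.symm i ≤ τ.symm j := by
          rw [Fin.le_def]
          omega
        have := hmono hle
        simpa [hτ] using this
      linarith
    · linarith
end

section
/- Let π be a permutation of {1,…,n} and let Q be any finite sequence of cyclically adjacent swaps applied to π whose net clockwise displacement vector d satisfies d(i) − d(j) ≤ n for all i, j. Then for any two distinct elements i, j with d(i) ≥ d(j): (a) 0 ≤ c(i,j) ≤ 1; (b) if d(i) = d(j) then c(i,j) = 0; (c) if d(i) − d(j) = n then c(i,j) = 1. -/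
namespace SwapCountAux

variable {n : ℕ}

/-- Net movement count of a single element. -/
def mi (Q : List (Fin n × Fin n)) (x : Fin n) : ℤ :=
  (Q.countP (fun q => decide (q.1 = x)) : ℤ) - (Q.countP (fun q => decide (q.2 = x)) : ℤ)

lemma mi_cons (q : Fin n × Fin n) (Q : List (Fin n × Fin n)) (x : Fin n) :
    mi (q :: Q) x = mi Q x + (if q.1 = x then 1 else 0) - (if q.2 = x then 1 else 0) := by
  simp only [mi, List.countP_cons]
  split_ifs <;> simp_all <;> ring

lemma swapCount_cons (q : Fin n × Fin n) (Q : List (Fin n × Fin n)) (i j : Fin n) :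
    swapCount (q :: Q) i j =
      swapCount Q i j + (if q = (i, j) then 1 else 0) - (if q = (j, i) then 1 else 0) := by
  simp only [swapCount, List.count_cons, beq_iff_eq]
  split_ifs <;> push_cast <;> ring

lemma finCast_inj [NeZero n] {x y : Fin n} (h : ((x : ℕ) : ZMod n) = ((y : ℕ) : ZMod n)) :
    x = y := by
  have := congrArg ZMod.val h
  rw [ZMod.val_cast_of_lt x.isLt, ZMod.val_cast_of_lt y.isLt] at this
  exact Fin.ext this

lemma finCast_add_one [NeZero n] {x y : Fin n} (h : y = x + 1) :
    ((y : ℕ) : ZMod n) = ((x : ℕ) : ZMod n) + 1 := by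
  subst h
  rw [Fin.val_add, ZMod.natCast_mod]
  push_cast
  congr 1
  rw [Fin.val_one', ZMod.natCast_mod, Nat.cast_one]

lemma zmod_one_ne_zero (hn : 1 < n) : (1 : ZMod n) ≠ 0 := by
  haveI : Fact (1 < n) := ⟨hn⟩
  exact one_ne_zero

lemma lemA {m D : ℤ} (hm : 1 < m) (h : m ∣ D + 1) : (D + 2) / m = D / m + 1 := by
  obtain ⟨k, hk⟩ := h
  have hm0 : m ≠ 0 := by omega
  have e1 : D / m = k - 1 := by
    rw [show D = (m - 1) + m * (k - 1) by linarith, Int.add_mul_ediv_left _ _ hm0,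
      Int.ediv_eq_zero_of_lt (by omega) (by omega)]
    ring
  have e2 : (D + 2) / m = k := by
    rw [show D + 2 = 1 + m * k by linarith, Int.add_mul_ediv_left _ _ hm0,
      Int.ediv_eq_zero_of_lt (by omega) (by omega)]
    ring
  omega

lemma lemB {m D : ℤ} (hm : 1 < m) (h : m ∣ D - 1) : (D - 2) / m = D / m - 1 := by
  obtain ⟨k, hk⟩ := h
  have hm0 : m ≠ 0 := by omega
  have e1 : D / m = k := by
    rw [show D = 1 + m * k by linarith, Int.add_mul_ediv_left _ _ hm0,
      Int.ediv_eq_zero_of_lt (by omega) (by omega)]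
    ring
  have e2 : (D - 2) / m = k - 1 := by
    rw [show D - 2 = (m - 1) + m * (k - 1) by linarith, Int.add_mul_ediv_left _ _ hm0,
      Int.ediv_eq_zero_of_lt (by omega) (by omega)]
    ring
  omega

lemma lemC {m D : ℤ} (hm : 0 < m) (h : ¬ m ∣ D + 1) : (D + 1) / m = D / m := by
  have h1 : 0 ≤ D % m := Int.emod_nonneg D (by omega)
  have h2 : D % m < m := Int.emod_lt_of_pos D hm
  have heq : m * (D / m) + D % m = D := Int.mul_ediv_add_emod D m
  have h3 : D % m + 1 < m := by
    rcases eq_or_lt_of_le (by omega : D % m + 1 ≤ m) with he | hl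
    · exact absurd ⟨D / m + 1, by linarith⟩ h
    · exact hl
  rw [show D + 1 = (D % m + 1) + m * (D / m) by linarith,
    Int.add_mul_ediv_left _ _ (by omega : m ≠ 0),
    Int.ediv_eq_zero_of_lt (by omega) h3]
  ring

lemma lemD {m D : ℤ} (hm : 0 < m) (h : ¬ m ∣ D) : (D - 1) / m = D / m := by
  have h1 : 0 ≤ D % m := Int.emod_nonneg D (by omega)
  have h2 : D % m < m := Int.emod_lt_of_pos D hm
  have heq : m * (D / m) + D % m = D := Int.mul_ediv_add_emod D m
  have h3 : 0 < D % m := by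
    rcases eq_or_lt_of_le h1 with he | hl
    · exact absurd ⟨D / m, by linarith⟩ h
    · exact hl
  rw [show D - 1 = (D % m - 1) + m * (D / m) by linarith,
    Int.add_mul_ediv_left _ _ (by omega : m ≠ 0),
    Int.ediv_eq_zero_of_lt (by omega) (by omega)]
  ring

lemma netDisp_eq_mi [NeZero n] (Q : List (Fin n × Fin n)) (i : Fin n) :
    netDisp Q i = mi Q i := by
  induction Q with
  | nil => simp [netDisp, swapCount, mi]
  | cons q Q ih =>
    obtain ⟨a, b⟩ := q
    have S1 : (∑ j ∈ Finset.univ.erase i, if (a, b) = (i, j) then (1:ℤ) else 0)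
        = if a = i ∧ b ≠ i then 1 else 0 := by
      by_cases ha : a = i
      · subst ha
        simp only [Prod.mk.injEq, true_and]
        rw [Finset.sum_ite_eq]
        simp [Finset.mem_erase]
      · simp [Prod.mk.injEq, ha]
    have S2 : (∑ j ∈ Finset.univ.erase i, if (a, b) = (j, i) then (1:ℤ) else 0)
        = if b = i ∧ a ≠ i then 1 else 0 := by
      by_cases hb : b = i
      · subst hb
        simp only [Prod.mk.injEq, and_true]
        rw [Finset.sum_ite_eq]
        simp [Finset.mem_erase]
      · simp [Prod.mk.injEq, hb]
    have hnd : netDisp ((a, b) :: Q) i = netDisp Q i +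
        ((if a = i ∧ b ≠ i then 1 else 0) - (if b = i ∧ a ≠ i then 1 else 0)) := by
      simp only [netDisp, swapCount_cons]
      rw [Finset.sum_sub_distrib, Finset.sum_add_distrib, S1, S2]
      ring
    rw [hnd, mi_cons, ih]
    by_cases ha : a = i <;> by_cases hb : b = i <;> simp [ha, hb] <;> ring

lemma key [NeZero n] (hn : 1 < n) (i j : Fin n) (hij : i ≠ j) :
    ∀ (Q : List (Fin n × Fin n)) (π : Equiv.Perm (Fin n)), IsSwapSeq π Q →
    ∀ D : ℤ, ((D : ZMod n) = ((π i : ℕ) : ZMod n) - ((π j : ℕ) : ZMod n)) →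
    swapCount Q i j = (D + mi Q i - mi Q j) / (n : ℤ) - D / (n : ℤ) := by
  intro Q
  induction Q with
  | nil => intro π _ D _; simp [swapCount, mi]
  | cons q Q ih =>
    intro π hseq D hD
    obtain ⟨hq, hseq'⟩ := hseq
    obtain ⟨a, b⟩ := q
    have hq' : π b = π a + 1 := hq
    have hcyc : ((π b : ℕ) : ZMod n) = ((π a : ℕ) : ZMod n) + 1 := finCast_add_one hq'
    have hnpos : (0:ℤ) < (n:ℤ) := by exact_mod_cast Nat.pos_of_ne_zero (NeZero.ne n)
    have hn1 : (1:ℤ) < (n:ℤ) := by exact_mod_cast hn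
    have hone : (1 : ZMod n) ≠ 0 := zmod_one_ne_zero hn
    have hπinj := π.injective
    have hπ'a : applySwap π (a, b) a = π b := by
      simp [applySwap, Equiv.swap_apply_left]
    have hπ'b : applySwap π (a, b) b = π a := by
      simp [applySwap, Equiv.swap_apply_right]
    have hπ'x : ∀ x : Fin n, x ≠ a → x ≠ b → applySwap π (a, b) x = π x := by
      intro x hxa hxb
      simp only [applySwap, Equiv.trans_apply]
      exact Equiv.swap_apply_of_ne_of_ne (fun h => hxa (hπinj h)) (fun h => hxb (hπinj h))
    have hndD : ¬ ((n:ℤ) ∣ D) := by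
      intro h
      have h0 : ((D : ℤ) : ZMod n) = 0 := (ZMod.intCast_zmod_eq_zero_iff_dvd D n).2 h
      exact hij (hπinj (finCast_inj (by linear_combination h0 - hD)))
    rw [swapCount_cons, mi_cons, mi_cons]
    by_cases hai : a = i
    · subst hai
      by_cases hbj : b = j
      · -- swap (i, j): i jumps clockwise past j
        subst hbj
        have hdvd : (n:ℤ) ∣ D + 1 := by
          rw [← ZMod.intCast_zmod_eq_zero_iff_dvd]
          push_cast
          linear_combination hD - hcyc
        have hstep := lemA hn1 hdvd
        have hIH := ih (applySwap π (a, b)) hseq' (D + 2) (by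
          rw [hπ'a, hπ'b]
          push_cast
          linear_combination hD - 2 * hcyc)
        rw [hIH]
        simp only [Prod.mk.injEq, hij, hij.symm, and_true, and_false, true_and, false_and,
          if_true, if_false, reduceIte, Ne.symm hij, not_false_iff]
        rw [show D + (mi Q a + 1 - 0) - (mi Q b + 0 - 1) = D + 2 + mi Q a - mi Q b by ring,
          hstep]
        ring
      · by_cases hbi : b = a
        · -- swap (i, i): impossible
          exact absurd (by linear_combination -(finCast_add_one (hbi ▸ hq' : π a = π a + 1)))
            hone
        · -- swap (i, b) with b ∉ {i, j}: i moves clockwise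
          have hnd1 : ¬ ((n:ℤ) ∣ D + 1) := by
            intro h
            have h0 : ((D + 1 : ℤ) : ZMod n) = 0 :=
              (ZMod.intCast_zmod_eq_zero_iff_dvd _ n).2 h
            push_cast at h0
            have hjb : ((π j : ℕ) : ZMod n) = ((π b : ℕ) : ZMod n) := by
              linear_combination hD - hcyc - h0
            exact hbj ((hπinj (finCast_inj hjb)).symm)
          have hstep := lemC hnpos hnd1
          have hIH := ih (applySwap π (a, b)) hseq' (D + 1) (by
            rw [hπ'a, hπ'x j (Ne.symm hij) (fun h => hbj h.symm)]
            push_cast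
            linear_combination hD - hcyc)
          rw [hIH]
          simp only [Prod.mk.injEq, hij, hbj, hbi, and_true, and_false, true_and, false_and,
            if_true, if_false, reduceIte, not_false_iff]
          rw [show D + (mi Q a + 1 - 0) - (mi Q j + 0 - 0) = D + 1 + mi Q a - mi Q j by ring,
            hstep]
          ring
    · by_cases haj : a = j
      · subst haj
        by_cases hbi : b = i
        · -- swap (j, i): i jumps counterclockwise past j
          subst hbi
          have hdvd : (n:ℤ) ∣ D - 1 := by
            rw [← ZMod.intCast_zmod_eq_zero_iff_dvd]
            push_cast
            linear_combination hD + hcyc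
          have hstep := lemB hn1 hdvd
          have hIH := ih (applySwap π (a, b)) hseq' (D - 2) (by
            rw [hπ'a, hπ'b]
            push_cast
            linear_combination hD + 2 * hcyc)
          rw [hIH]
          simp only [Prod.mk.injEq, hij, hij.symm, and_true, and_false, true_and, false_and,
            if_true, if_false, reduceIte, Ne.symm hij, not_false_iff]
          rw [show D + (mi Q b + 0 - 1) - (mi Q a + 1 - 0) = D - 2 + mi Q b - mi Q a by ring,
            hstep]
          ring
        · by_cases hbj : b = a
          · -- swap (j, j): impossible
            exact absurd (by linear_combination -(finCast_add_one (hbj ▸ hq' : π a = π a + 1)))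
              hone
          · -- swap (j, b) with b ∉ {i, j}: j moves clockwise
            have hstep := lemD hnpos hndD
            have hIH := ih (applySwap π (a, b)) hseq' (D - 1) (by
              rw [hπ'a, hπ'x i (fun h => hai h.symm) (fun h => hbi h.symm)]
              push_cast
              linear_combination hD + hcyc)
            rw [hIH]
            simp only [Prod.mk.injEq, hai, hbi, hbj, and_true, and_false, true_and, false_and,
              if_true, if_false, reduceIte, not_false_iff]
            rw [show D + (mi Q i + 0 - 0) - (mi Q a + 1 - 0) = D - 1 + mi Q i - mi Q a by ring,
              hstep]
            ring
      · by_cases hbi : b = i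
        · -- swap (a, i) with a ∉ {i, j}: i moves counterclockwise
          subst hbi
          have hstep := lemD hnpos hndD
          have hIH := ih (applySwap π (a, b)) hseq' (D - 1) (by
            rw [hπ'b, hπ'x j (fun h => haj h.symm) (Ne.symm hij)]
            push_cast
            linear_combination hD + hcyc)
          rw [hIH]
          simp only [Prod.mk.injEq, hai, haj, hij, and_true, and_false, true_and, false_and,
            if_true, if_false, reduceIte, not_false_iff]
          rw [show D + (mi Q b + 0 - 1) - (mi Q j + 0 - 0) = D - 1 + mi Q b - mi Q j by ring,
            hstep]
          ring
        · by_cases hbj : b = j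
          · -- swap (a, j) with a ∉ {i, j}: j moves counterclockwise
            subst hbj
            have hnd1 : ¬ ((n:ℤ) ∣ D + 1) := by
              intro h
              have h0 : ((D + 1 : ℤ) : ZMod n) = 0 :=
                (ZMod.intCast_zmod_eq_zero_iff_dvd _ n).2 h
              push_cast at h0
              have hia : ((π i : ℕ) : ZMod n) = ((π a : ℕ) : ZMod n) := by
                linear_combination -hD + hcyc + h0
              exact hai ((hπinj (finCast_inj hia)).symm)
            have hstep := lemC hnpos hnd1
            have hIH := ih (applySwap π (a, b)) hseq' (D + 1) (by
              rw [hπ'b, hπ'x i (fun h => hai h.symm) hij]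
              push_cast
              linear_combination hD - hcyc)
            rw [hIH]
            simp only [Prod.mk.injEq, hai, haj, hbi, hij, and_true, and_false, true_and,
              false_and, if_true, if_false, reduceIte, not_false_iff]
            rw [show D + (mi Q i + 0 - 0) - (mi Q b + 0 - 1) = D + 1 + mi Q i - mi Q b by ring,
              hstep]
            ring
          · -- swap (a, b) with a, b ∉ {i, j}: nothing changes
            have hIH := ih (applySwap π (a, b)) hseq' D (by
              rw [hπ'x i (fun h => hai h.symm) (fun h => hbi h.symm),
                hπ'x j (fun h => haj h.symm) (fun h => hbj h.symm)]
              exact hD)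
            rw [hIH]
            simp only [Prod.mk.injEq, hai, haj, hbi, hbj, and_true, and_false, true_and,
              false_and, if_true, if_false, reduceIte, not_false_iff]
            rw [show D + (mi Q i + 0 - 0) - (mi Q j + 0 - 0) = D + mi Q i - mi Q j by ring]
            ring

end SwapCountAux

/-- Properties of the net swap counts of a sequence of cyclically adjacent swaps whose
net displacement vector satisfies `d(i) - d(j) ≤ n` for all `i, j`:
for distinct `i, j` with `d(i) ≥ d(j)`, (a) `0 ≤ c(i,j) ≤ 1`, (b) `d(i) = d(j)`
implies `c(i,j) = 0`, and (c) `d(i) - d(j) = n` implies `c(i,j) = 1`. -/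
theorem swapCount_properties (n : ℕ) [NeZero n] (π : Equiv.Perm (Fin n))
    (Q : List (Fin n × Fin n)) (hQ : IsSwapSeq π Q)
    (hopt : ∀ i j : Fin n, netDisp Q i - netDisp Q j ≤ (n : ℤ))
    (i j : Fin n) (hij : i ≠ j) (hge : netDisp Q j ≤ netDisp Q i) :
    (0 ≤ swapCount Q i j ∧ swapCount Q i j ≤ 1) ∧
      (netDisp Q i = netDisp Q j → swapCount Q i j = 0) ∧
      (netDisp Q i - netDisp Q j = (n : ℤ) → swapCount Q i j = 1) := by
  have hn : 1 < n := by
    by_contra h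
    push_neg at h
    haveI := Fin.subsingleton_iff_le_one.mpr h
    exact hij (Subsingleton.elim i j)
  have hnpos : (0:ℤ) < (n:ℤ) := by exact_mod_cast Nat.pos_of_ne_zero (NeZero.ne n)
  set D : ℤ := ((π i : ℕ) : ℤ) - ((π j : ℕ) : ℤ) with hDdef
  have hD : ((D : ZMod n) = ((π i : ℕ) : ZMod n) - ((π j : ℕ) : ZMod n)) := by
    rw [hDdef]
    push_cast
    ring
  have hkey := SwapCountAux.key hn i j hij Q π hQ D hD
  rw [show D + SwapCountAux.mi Q i - SwapCountAux.mi Q j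
      = D + (netDisp Q i - netDisp Q j) by
    rw [SwapCountAux.netDisp_eq_mi, SwapCountAux.netDisp_eq_mi]; ring] at hkey
  have hd0 : 0 ≤ netDisp Q i - netDisp Q j := by linarith
  have hdn : netDisp Q i - netDisp Q j ≤ (n:ℤ) := hopt i j
  have hplus : (D + (n:ℤ)) / (n:ℤ) = D / (n:ℤ) + 1 := by
    have h := Int.add_mul_ediv_left D 1 (show (n:ℤ) ≠ 0 by omega)
    simpa using h
  refine ⟨⟨?_, ?_⟩, ?_, ?_⟩
  · rw [hkey]
    have := Int.ediv_le_ediv hnpos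
      (show D ≤ D + (netDisp Q i - netDisp Q j) by linarith)
    linarith
  · rw [hkey]
    have := Int.ediv_le_ediv hnpos
      (show D + (netDisp Q i - netDisp Q j) ≤ D + (n:ℤ) by linarith)
    rw [hplus] at this
    linarith
  · intro he
    rw [hkey, he, show D + (netDisp Q j - netDisp Q j) = D by ring]
    ring
  · intro he
    rw [hkey, he, hplus]
    ring
end

section
/- Let d : {1,…,n} → ℤ satisfy ∑_{i=1}^n d(i) = 0 and d(i) − d(j) ≤ n for all i, j ∈ {1,…,n}. Then (1/2)·∑_{i=1}^n |d(i)| ≤ n²/4. -/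
/-- If `d` sums to zero and `d(i) - d(j) ≤ n` for all `i, j`, then
`(1/2)·∑ᵢ |d(i)| ≤ n²/4`. -/
theorem half_sum_abs_le (n : ℕ) (d : Fin n → ℤ) (hsum : ∑ i, d i = 0)
    (hopt : ∀ i j : Fin n, d i - d j ≤ (n : ℤ)) :
    (1 / 2 : ℚ) * ∑ i, (|d i| : ℚ) ≤ (n : ℚ) ^ 2 / 4 := by
  rcases Nat.eq_zero_or_pos n with h0 | hn
  · subst h0; simp
  have key : 2 * ∑ i, |d i| ≤ (n : ℤ) ^ 2 := by
    set S : Finset (Fin n) := Finset.univ.filter (fun i => 0 < d i) with hSdef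
    set T : Finset (Fin n) := Finset.univ.filter (fun i => ¬ 0 < d i) with hTdef
    set P : ℤ := ∑ i ∈ S, d i with hP
    set N : ℤ := ∑ i ∈ T, d i with hN
    have hPN : P + N = 0 := by
      rw [hP, hN, hSdef, hTdef, Finset.sum_filter_add_sum_filter_not]; exact hsum
    have hcard : S.card + T.card = n := by
      rw [hSdef, hTdef, Finset.card_filter_add_card_filter_not]
      simp
    have habs : ∑ i, |d i| = P - N := by
      rw [← Finset.sum_filter_add_sum_filter_not Finset.univ (fun i => 0 < d i) (fun i => |d i|)]
      rw [hP, hN, hSdef, hTdef]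
      have h1 : ∑ i ∈ Finset.univ.filter (fun i => 0 < d i), |d i|
          = ∑ i ∈ Finset.univ.filter (fun i => 0 < d i), d i := by
        apply Finset.sum_congr rfl
        intro i hi
        simp only [Finset.mem_filter] at hi
        exact abs_of_pos hi.2
      have h2 : ∑ i ∈ Finset.univ.filter (fun i => ¬ 0 < d i), |d i|
          = ∑ i ∈ Finset.univ.filter (fun i => ¬ 0 < d i), (-(d i)) := by
        apply Finset.sum_congr rfl
        intro i hi
        simp only [Finset.mem_filter] at hi
        exact abs_of_nonpos (not_lt.mp hi.2)
      rw [h1, h2, Finset.sum_neg_distrib]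
      ring
    have hpair : ∑ i ∈ S, ∑ j ∈ T, (d i - d j) ≤ (S.card : ℤ) * T.card * n := by
      calc ∑ i ∈ S, ∑ j ∈ T, (d i - d j)
          ≤ ∑ i ∈ S, ∑ j ∈ T, (n : ℤ) := by
            apply Finset.sum_le_sum; intro i _
            apply Finset.sum_le_sum; intro j _
            exact hopt i j
        _ = (S.card : ℤ) * T.card * n := by
            simp [Finset.sum_const, mul_assoc]
    have hLHS : ∑ i ∈ S, ∑ j ∈ T, (d i - d j) = (T.card : ℤ) * P - (S.card : ℤ) * N := by
      simp only [Finset.sum_sub_distrib, Finset.sum_const, nsmul_eq_mul]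
      rw [← Finset.mul_sum, ← hP, ← hN]
    have hNP : N = -P := by linarith
    have hnP : (n : ℤ) * P ≤ (S.card : ℤ) * T.card * n := by
      have h1 : ((S.card : ℤ) + T.card) = n := by exact_mod_cast hcard
      have h2 := hLHS ▸ hpair
      have h3 : ((S.card : ℤ) + T.card) * P = (n : ℤ) * P := by rw [h1]
      rw [hNP] at h2
      nlinarith [h2, h3]
    have hPle : P ≤ (S.card : ℤ) * T.card := by
      have hn' : (0 : ℤ) < n := by exact_mod_cast hn
      nlinarith
    have hst : 4 * ((S.card : ℤ) * T.card) ≤ (n : ℤ) ^ 2 := by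
      have : ((S.card : ℤ) + T.card) = n := by exact_mod_cast hcard
      nlinarith [sq_nonneg ((S.card : ℤ) - T.card)]
    rw [habs, hNP]
    nlinarith
  have hcast : ∑ i, (|d i| : ℚ) = ((∑ i, |d i| : ℤ) : ℚ) := by
    push_cast; rfl
  rw [hcast]
  have : ((2 * ∑ i, |d i| : ℤ) : ℚ) ≤ ((n : ℤ) ^ 2 : ℚ) := by exact_mod_cast key
  push_cast at this
  linarith
end
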